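/- arXiv:1512.08711 — 7 statements merged into one kernel-verified Lean document; each statement's English description precedes it below -/
import Mathlib

section
/- Let H be a real Hilbert space and A, B nonempty closed convex subsets of H with ρ := d_H(A,B) < ∞. Define G(t) := (A + D_{tρ}) ∩ (B + D_{(1-t)ρ}) for t ∈ [0,1], where D_r is the closed ball of radius r centered at 0. Then G(t) is a nonempty closed convex set for every t ∈ [0,1], G(0) = A, G(1) = B, and d_H(G(s), G(t)) = |t - s|·ρ for all s, t ∈ [0,1]; in particular G is a geodesic in the space of nonempty closed convex subsets of H endowed with the Hausdorff distance. -/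
open Set Filter Topology Metric
open scoped Pointwise

section Aux

variable {H : Type*} [NormedAddCommGroup H] [InnerProductSpace ℝ H] [CompleteSpace H]

/-- Nearest point projection onto a nonempty closed convex set. -/
lemma aux_proj {B : Set H} (hBne : B.Nonempty) (hBcl : IsClosed B) (hBcv : Convex ℝ B)
    (x : H) : ∃ y ∈ B, dist x y = Metric.infDist x B := by
  obtain ⟨y, hyB, hy⟩ := exists_norm_eq_iInf_of_complete_convex hBne hBcl.isComplete hBcv x
  refine ⟨y, hyB, ?_⟩
  rw [Metric.infDist_eq_iInf, dist_eq_norm]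
  simpa only [dist_eq_norm] using hy

/-- `A + D_r` is the sublevel set of the distance to `A`. -/
lemma aux_add_ball {A : Set H} (hAne : A.Nonempty) (hAcl : IsClosed A) (hAcv : Convex ℝ A)
    {r : ℝ} (hr : 0 ≤ r) :
    A + Metric.closedBall (0 : H) r = {x | Metric.infDist x A ≤ r} := by
  ext x
  constructor
  · rintro ⟨a, ha, d, hd, rfl⟩
    calc Metric.infDist (a + d) A ≤ dist (a + d) a := Metric.infDist_le_dist_of_mem ha
      _ = ‖d‖ := by simp [dist_eq_norm]
      _ ≤ r := mem_closedBall_zero_iff.1 hd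
  · intro hx
    obtain ⟨a, haA, ha⟩ := aux_proj hAne hAcl hAcv x
    refine ⟨a, haA, x - a, ?_, by module⟩
    rw [mem_closedBall_zero_iff, ← dist_eq_norm]
    calc dist x a = Metric.infDist x A := ha
      _ ≤ r := hx

/-- Key step: move a point closer to `B` without moving away from `A` too much. -/
lemma aux_step {B : Set H} (hBne : B.Nonempty) (hBcl : IsClosed B) (hBcv : Convex ℝ B)
    (A : Set H) (x : H) (α β β' : ℝ) (hβ' : 0 ≤ β') (hββ' : β' ≤ β)
    (hα : Metric.infDist x A ≤ α) (hβ : Metric.infDist x B ≤ β) :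
    ∃ y, dist x y ≤ β - β' ∧ Metric.infDist y A ≤ α + (β - β') ∧
      Metric.infDist y B ≤ β' := by
  by_cases h : Metric.infDist x B ≤ β'
  · exact ⟨x, by simp [sub_nonneg.2 hββ'], by simpa using hα.trans (by linarith), h⟩
  · push_neg at h
    obtain ⟨b, hbB, hb⟩ := aux_proj hBne hBcl hBcv x
    set d := dist x b with hd
    have hdB : d = Metric.infDist x B := hb
    have hd0 : 0 < d := lt_of_le_of_lt hβ' (hdB ▸ h)
    have hdβ : d ≤ β := hdB ▸ hβ
    have hβ'd : β' ≤ d := le_of_lt (hdB ▸ h)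
    set y := x + (1 - β' / d) • (b - x) with hy
    have hxy : dist x y = d - β' := by
      have : y - x = (1 - β' / d) • (b - x) := by rw [hy]; abel
      rw [dist_eq_norm', this, norm_smul, Real.norm_eq_abs,
        abs_of_nonneg (by rw [sub_nonneg]; exact div_le_one_of_le₀ hβ'd (le_of_lt hd0))]
      have hbx : ‖b - x‖ = d := by rw [hd, dist_eq_norm, norm_sub_rev]
      rw [hbx]
      field_simp
    have hyb : dist y b = β' := by
      have : y - b = (β' / d) • (x - b) := by
        rw [hy]; module
      rw [dist_eq_norm, this, norm_smul, Real.norm_eq_abs,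
        abs_of_nonneg (div_nonneg hβ' (le_of_lt hd0)), ← dist_eq_norm, ← hd]
      field_simp
    refine ⟨y, by rw [hxy]; linarith, ?_, ?_⟩
    · calc Metric.infDist y A ≤ Metric.infDist x A + dist y x :=
          Metric.infDist_le_infDist_add_dist
        _ = Metric.infDist x A + (d - β') := by rw [dist_comm, hxy]
        _ ≤ α + (β - β') := by linarith
    · calc Metric.infDist y B ≤ dist y b := Metric.infDist_le_dist_of_mem hbB
        _ = β' := hyb

end Aux

/-- The family `G(t) = (A + D_{tρ}) ∩ (B + D_{(1-t)ρ})`, `ρ = d_H(A,B)`, is a geodesic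
connecting `A` to `B` in the space of nonempty closed convex subsets of a real Hilbert
space endowed with the Hausdorff distance. -/
theorem stmt_8 {H : Type*} [NormedAddCommGroup H] [InnerProductSpace ℝ H] [CompleteSpace H]
    (A B : Set H) (hAne : A.Nonempty) (hAcl : IsClosed A) (hAcv : Convex ℝ A)
    (hBne : B.Nonempty) (hBcl : IsClosed B) (hBcv : Convex ℝ B)
    (hfin : EMetric.hausdorffEdist A B ≠ ⊤)
    (ρ : ℝ) (hρ : ρ = (EMetric.hausdorffEdist A B).toReal)
    (G : ℝ → Set H)
    (hG : ∀ t, G t = (A + Metric.closedBall (0:H) (t * ρ))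
        ∩ (B + Metric.closedBall (0:H) ((1 - t) * ρ))) :
    (∀ t ∈ Set.Icc (0:ℝ) 1, (G t).Nonempty ∧ IsClosed (G t) ∧ Convex ℝ (G t)) ∧
    G 0 = A ∧ G 1 = B ∧
    ∀ s ∈ Set.Icc (0:ℝ) 1, ∀ t ∈ Set.Icc (0:ℝ) 1,
      EMetric.hausdorffEdist (G s) (G t) = ENNReal.ofReal (|t - s| * ρ) := by
  have hρ0 : 0 ≤ ρ := hρ ▸ ENNReal.toReal_nonneg
  have hAB : ∀ a ∈ A, Metric.infDist a B ≤ ρ := fun a ha =>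
    hρ ▸ Metric.infDist_le_hausdorffDist_of_mem ha hfin
  have hfin' : EMetric.hausdorffEdist B A ≠ ⊤ := by
    exact fun h => hfin (EMetric.hausdorffEdist_comm.trans h)
  have hBA : ∀ b ∈ B, Metric.infDist b A ≤ ρ := fun b hb => by
    have := Metric.infDist_le_hausdorffDist_of_mem hb hfin'
    rw [Metric.hausdorffDist, EMetric.hausdorffEdist_comm] at this
    exact this.trans_eq hρ.symm
  -- membership characterisation
  have hmem : ∀ t : ℝ, 0 ≤ t → t ≤ 1 → ∀ x : H,
      x ∈ G t ↔ Metric.infDist x A ≤ t * ρ ∧ Metric.infDist x B ≤ (1 - t) * ρ := by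
    intro t ht0 ht1 x
    rw [hG t, aux_add_ball hAne hAcl hAcv (mul_nonneg ht0 hρ0),
      aux_add_ball hBne hBcl hBcv (mul_nonneg (by linarith) hρ0)]
    exact Set.mem_inter_iff x _ _
  -- one-sided Hausdorff bound for ordered parameters
  have key : ∀ s t : ℝ, 0 ≤ s → s ≤ t → t ≤ 1 →
      EMetric.hausdorffEdist (G s) (G t) ≤ ENNReal.ofReal ((t - s) * ρ) := by
    intro s t hs hst ht
    have h1 : 0 ≤ (t - s) * ρ := mul_nonneg (by linarith) hρ0
    apply EMetric.hausdorffEdist_le_of_mem_edist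
    · intro x hx
      rw [hmem s hs (hst.trans ht) x] at hx
      obtain ⟨y, hxy, hyA, hyB⟩ := aux_step hBne hBcl hBcv A x (s * ρ) ((1 - s) * ρ)
        ((1 - t) * ρ) (mul_nonneg (by linarith) hρ0)
        (by nlinarith) hx.1 hx.2
      refine ⟨y, (hmem t (hs.trans hst) ht y).2 ⟨by nlinarith, hyB⟩, ?_⟩
      rw [edist_le_ofReal h1]
      nlinarith
    · intro y hy
      rw [hmem t (hs.trans hst) ht y] at hy
      obtain ⟨x, hyx, hxB, hxA⟩ := aux_step hAne hAcl hAcv B y ((1 - t) * ρ) (t * ρ)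
        (s * ρ) (mul_nonneg hs hρ0) (by nlinarith) hy.2 hy.1
      refine ⟨x, (hmem s hs (hst.trans ht) x).2 ⟨by nlinarith, by nlinarith⟩, ?_⟩
      rw [edist_le_ofReal h1]
      nlinarith
  -- endpoints
  have hsub0 : ∀ (C : Set H), C.Nonempty → IsClosed C → Convex ℝ C →
      C + Metric.closedBall (0 : H) 0 = C := by
    intro C hCne hCcl hCcv
    rw [aux_add_ball hCne hCcl hCcv le_rfl]
    ext x
    simp only [Set.mem_setOf_eq]
    rw [hCcl.mem_iff_infDist_zero hCne]
    exact ⟨fun h => le_antisymm h Metric.infDist_nonneg, le_of_eq⟩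
  have hG0 : G 0 = A := by
    rw [hG 0, zero_mul, hsub0 A hAne hAcl hAcv]
    refine Set.inter_eq_left.2 fun a ha => ?_
    rw [aux_add_ball hBne hBcl hBcv (by linarith : (0:ℝ) ≤ (1 - 0) * ρ)]
    simpa using hAB a ha
  have hG1 : G 1 = B := by
    rw [hG 1]
    have : (1 - 1 : ℝ) * ρ = 0 := by ring
    rw [this, hsub0 B hBne hBcl hBcv]
    refine Set.inter_eq_right.2 fun b hb => ?_
    rw [aux_add_ball hAne hAcl hAcv (by linarith : (0:ℝ) ≤ 1 * ρ)]
    simpa using hBA b hb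
  refine ⟨?_, hG0, hG1, ?_⟩
  · -- nonempty, closed, convex
    rintro t ⟨ht0, ht1⟩
    refine ⟨?_, ?_, ?_⟩
    · obtain ⟨a, ha⟩ := hAne
      obtain ⟨b, hbB, hb⟩ := aux_proj hBne hBcl hBcv a
      have hab : dist a b ≤ ρ := hb.trans_le (hAB a ha)
      refine ⟨a + t • (b - a), (hmem t ht0 ht1 _).2 ⟨?_, ?_⟩⟩
      · calc Metric.infDist (a + t • (b - a)) A ≤ dist (a + t • (b - a)) a :=
            Metric.infDist_le_dist_of_mem ha
          _ = t * dist a b := by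
            rw [dist_eq_norm]
            simp only [add_sub_cancel_left, norm_smul, Real.norm_eq_abs,
              abs_of_nonneg ht0, dist_eq_norm, norm_sub_rev]
          _ ≤ t * ρ := by nlinarith
      · calc Metric.infDist (a + t • (b - a)) B ≤ dist (a + t • (b - a)) b :=
            Metric.infDist_le_dist_of_mem hbB
          _ = (1 - t) * dist a b := by
            have : a + t • (b - a) - b = (1 - t) • (a - b) := by module
            rw [dist_eq_norm, this, norm_smul, Real.norm_eq_abs,
              abs_of_nonneg (by linarith), dist_eq_norm]
          _ ≤ (1 - t) * ρ := by nlinarith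
    · have : G t = {x | Metric.infDist x A ≤ t * ρ} ∩
          {x | Metric.infDist x B ≤ (1 - t) * ρ} := by
        rw [hG t, aux_add_ball hAne hAcl hAcv (mul_nonneg ht0 hρ0),
          aux_add_ball hBne hBcl hBcv (mul_nonneg (by linarith) hρ0)]
      rw [this]
      exact ((isClosed_le (Metric.continuous_infDist_pt A) continuous_const).inter
        (isClosed_le (Metric.continuous_infDist_pt B) continuous_const))
    · rw [hG t]
      exact (hAcv.add (convex_closedBall _ _)).inter (hBcv.add (convex_closedBall _ _))
  · -- the distance formula
    have main : ∀ s t : ℝ, 0 ≤ s → s ≤ t → t ≤ 1 →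
        EMetric.hausdorffEdist (G s) (G t) = ENNReal.ofReal ((t - s) * ρ) := by
      intro s t hs hst ht
      have hle := key s t hs hst ht
      have h0s := key 0 s le_rfl hs (hst.trans ht)
      have ht1 := key t 1 (hs.trans hst) ht le_rfl
      rw [hG0] at h0s
      rw [hG1] at ht1
      have hene : EMetric.hausdorffEdist (G s) (G t) ≠ ⊤ :=
        ne_top_of_le_ne_top ENNReal.ofReal_ne_top hle
      have h0sne : EMetric.hausdorffEdist A (G s) ≠ ⊤ :=
        ne_top_of_le_ne_top ENNReal.ofReal_ne_top h0s
      have ht1ne : EMetric.hausdorffEdist (G t) B ≠ ⊤ :=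
        ne_top_of_le_ne_top ENNReal.ofReal_ne_top ht1
      have tri : EMetric.hausdorffEdist A B ≤ EMetric.hausdorffEdist A (G s) +
          EMetric.hausdorffEdist (G s) (G t) + EMetric.hausdorffEdist (G t) B :=
        le_trans (EMetric.hausdorffEdist_triangle (t := G t))
          (_root_.add_le_add (EMetric.hausdorffEdist_triangle (t := G s)) le_rfl)
      -- pass to real numbers
      have hrrr : ρ ≤ (EMetric.hausdorffEdist A (G s)).toReal +
          (EMetric.hausdorffEdist (G s) (G t)).toReal +
          (EMetric.hausdorffEdist (G t) B).toReal := by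
        rw [hρ]
        refine le_trans (ENNReal.toReal_mono ?_ tri) ?_
        · exact fun h => (ENNReal.add_eq_top.1 h).elim
            (fun h => (ENNReal.add_eq_top.1 h).elim h0sne hene) ht1ne
        · rw [ENNReal.toReal_add (by exact fun h =>
            (ENNReal.add_eq_top.1 h).elim h0sne hene) ht1ne,
            ENNReal.toReal_add h0sne hene]
      have hrle : (EMetric.hausdorffEdist (G s) (G t)).toReal ≤ (t - s) * ρ := by
        have := ENNReal.toReal_mono ENNReal.ofReal_ne_top hle
        rwa [ENNReal.toReal_ofReal (mul_nonneg (by linarith) hρ0)] at this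
      have h0sr : (EMetric.hausdorffEdist A (G s)).toReal ≤ s * ρ := by
        have := ENNReal.toReal_mono ENNReal.ofReal_ne_top h0s
        rwa [ENNReal.toReal_ofReal (by simpa using mul_nonneg hs hρ0), sub_zero] at this
      have ht1r : (EMetric.hausdorffEdist (G t) B).toReal ≤ (1 - t) * ρ := by
        have := ENNReal.toReal_mono ENNReal.ofReal_ne_top ht1
        rwa [ENNReal.toReal_ofReal (mul_nonneg (by linarith) hρ0)] at this
      have heq : (EMetric.hausdorffEdist (G s) (G t)).toReal = (t - s) * ρ := by
        nlinarith
      rw [← ENNReal.ofReal_toReal hene, heq]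
    intro s hs t ht
    rcases le_total s t with hst | hts
    · rw [abs_of_nonneg (by linarith : (0:ℝ) ≤ t - s)]
      exact main s t hs.1 hst ht.2
    · rw [abs_of_nonpos (by linarith : t - s ≤ 0), neg_sub]
      refine EMetric.hausdorffEdist_comm.trans ?_
      exact main t s ht.1 hts hs.2
end

section
/- Let H be a real Hilbert space and A, B nonempty closed convex subsets with ρ := d_H(A,B) < ∞, and let G(t) := (A + D_{tρ}) ∩ (B + D_{(1-t)ρ}). Fix u₀ ∈ A, and let t₀ ∈ [0,1] be the unique number with ‖u₀ - Proj_B(u₀)‖ = (1 - t₀)ρ (assume ρ > 0 and u₀ ≠ Proj_B(u₀)). Define y : [0,1] → H by y(t) = u₀ for t ∈ [0,t₀], y(t) = u₀ + ((t - t₀)/(1 - t₀))(Proj_B(u₀) - u₀) for t ∈ [t₀,1). Then y is Lipschitz with y(t) ∈ G(t) for all t, y(0) = u₀, and -y'(t) lies in the normal cone N_{G(t)}(y(t)) for a.e. t ∈ [0,1]. -/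
open Set Filter Topology MeasureTheory
open scoped Pointwise
open scoped RealInnerProductSpace

/-- Explicit solution of the sweeping process driven by the geodesic
`G(t) = (A + D_{tρ}) ∩ (B + D_{(1-t)ρ})` of convex sets, with initial point `u₀ ∈ A`:
the solution stays at `u₀` until time `t₀` and then moves affinely towards `Proj_B(u₀)`. -/
theorem stmt_9 {H : Type*} [NormedAddCommGroup H] [InnerProductSpace ℝ H] [CompleteSpace H]
    (A B : Set H) (hAne : A.Nonempty) (hAcl : IsClosed A) (hAcv : Convex ℝ A)
    (hBne : B.Nonempty) (hBcl : IsClosed B) (hBcv : Convex ℝ B)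
    (hfin : EMetric.hausdorffEdist A B ≠ ⊤)
    (ρ : ℝ) (hρ : ρ = (EMetric.hausdorffEdist A B).toReal) (hρpos : 0 < ρ)
    (G : ℝ → Set H)
    (hG : ∀ t, G t = (A + Metric.closedBall (0:H) (t * ρ))
        ∩ (B + Metric.closedBall (0:H) ((1 - t) * ρ)))
    (u0 : H) (hu0 : u0 ∈ A)
    (b : H) (hb : b ∈ B) (hproj : ∀ v ∈ B, ⟪u0 - b, v - b⟫ ≤ 0)
    (hneq : u0 ≠ b)
    (t0 : ℝ) (ht0 : t0 ∈ Set.Icc (0:ℝ) 1) (ht0eq : ‖u0 - b‖ = (1 - t0) * ρ)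
    (y : ℝ → H)
    (hy : ∀ t, y t = if t ≤ t0 then u0 else u0 + ((t - t0) / (1 - t0)) • (b - u0)) :
    (∃ K : NNReal, LipschitzOnWith K y (Set.Icc 0 1)) ∧
    (∀ t ∈ Set.Icc (0:ℝ) 1, y t ∈ G t) ∧ y 0 = u0 ∧
    ∀ᵐ t ∂(MeasureTheory.volume.restrict (Set.Ioo (0:ℝ) 1)),
      ∀ d : H, HasDerivAt y d t → ∀ v ∈ G t, ⟪-d, v - y t⟫ ≤ 0 := by
  have hnorm_pos : 0 < ‖u0 - b‖ := by
    rw [norm_pos_iff, sub_ne_zero]; exact hneq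
  have h1t0 : 0 < 1 - t0 := by nlinarith [ht0eq, ht0.2]
  have hbu : ‖b - u0‖ = (1 - t0) * ρ := by rw [norm_sub_rev]; exact ht0eq
  have hcancel : ∀ a c : ℝ, a / (1 - t0) * ((1 - t0) * c) = a * c := by
    intro a c
    field_simp
  refine ⟨?_, ?_, ?_, ?_⟩
  · -- Lipschitz
    have hy' : ∀ s, y s = u0 + (max (s - t0) 0 / (1 - t0)) • (b - u0) := by
      intro s
      rw [hy]
      split_ifs with h
      · rw [max_eq_right (by linarith)]
        simp
      · rw [max_eq_left (by push_neg at h; linarith)]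
    refine ⟨⟨ρ, hρpos.le⟩, LipschitzOnWith.of_dist_le_mul fun s _ t _ => ?_⟩
    show dist (y s) (y t) ≤ ρ * dist s t
    have hsub : y s - y t = ((max (s - t0) 0 - max (t - t0) 0) / (1 - t0)) • (b - u0) := by
      rw [hy' s, hy' t, add_sub_add_left_eq_sub, ← sub_smul, ← sub_div]
    have h2 : |max (s - t0) 0 - max (t - t0) 0| ≤ |s - t| := by
      have := abs_max_sub_max_le_abs (s - t0) (t - t0) 0
      simpa using this
    rw [dist_eq_norm, hsub, norm_smul, Real.norm_eq_abs, abs_div, abs_of_pos h1t0,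
      hbu, Real.dist_eq, hcancel]
    nlinarith [abs_nonneg (s - t), abs_nonneg (max (s - t0) 0 - max (t - t0) 0)]
  · -- membership
    intro t ht
    rw [hG, hy]
    split_ifs with h
    · constructor
      · have h1 : (0:H) ∈ Metric.closedBall (0:H) (t * ρ) := by
          simp only [Metric.mem_closedBall, dist_self]
          exact mul_nonneg ht.1 hρpos.le
        have := Set.add_mem_add hu0 h1
        simpa using this
      · have h1 : u0 - b ∈ Metric.closedBall (0:H) ((1 - t) * ρ) := by
          simp only [Metric.mem_closedBall, dist_zero_right]
          rw [ht0eq]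
          nlinarith [ht0.1, hρpos]
        have := Set.add_mem_add hb h1
        simpa using this
    · push_neg at h
      set s : ℝ := (t - t0) / (1 - t0) with hs
      have hs0 : 0 ≤ s := div_nonneg (by linarith) h1t0.le
      have hs1 : (1 - t) / (1 - t0) = 1 - s := by
        rw [hs]
        field_simp
        ring
      have hs1' : 0 ≤ 1 - s := by
        rw [← hs1]
        exact div_nonneg (by linarith [ht.2]) h1t0.le
      constructor
      · have hsnorm : ‖s • (b - u0)‖ = (t - t0) * ρ := by
          rw [norm_smul, Real.norm_eq_abs, abs_of_nonneg hs0, hbu, hs, hcancel]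
        have h1 : s • (b - u0) ∈ Metric.closedBall (0:H) (t * ρ) := by
          rw [Metric.mem_closedBall, dist_zero_right, hsnorm]
          nlinarith [ht0.1, hρpos.le]
        exact Set.add_mem_add hu0 h1
      · have heq : u0 + s • (b - u0) = b + (1 - s) • (u0 - b) := by
          have h3 : (1 - s) • (u0 - b) = (u0 - b) - s • (u0 - b) := by
            rw [sub_smul, one_smul]
          rw [h3, smul_sub, smul_sub]
          abel
        rw [heq]
        have hnorm2 : ‖(1 - s) • (u0 - b)‖ = (1 - t) * ρ := by
          rw [norm_smul, Real.norm_eq_abs, abs_of_nonneg hs1', ht0eq, ← hs1, hcancel]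
        have h1 : (1 - s) • (u0 - b) ∈ Metric.closedBall (0:H) ((1 - t) * ρ) := by
          rw [Metric.mem_closedBall, dist_zero_right, hnorm2]
        exact Set.add_mem_add hb h1
  · rw [hy, if_pos ht0.1]
  · -- sweeping inclusion a.e.
    have hae0 : ∀ᵐ (t : ℝ), t ≠ t0 := by
      rw [ae_iff]
      have : {a : ℝ | ¬a ≠ t0} = {t0} := by ext a; simp [not_not]
      rw [this]
      exact measure_singleton t0
    have hae : ∀ᵐ t ∂(volume.restrict (Set.Ioo (0:ℝ) 1)), t ∈ Set.Ioo (0:ℝ) 1 ∧ t ≠ t0 :=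
      (ae_restrict_mem measurableSet_Ioo).and (ae_restrict_of_ae hae0)
    filter_upwards [hae] with t ⟨⟨ht0', ht1⟩, htne⟩ d hd v hv
    rcases lt_or_gt_of_ne htne with hlt | hgt
    · -- y locally constant, so d = 0
      have hev : y =ᶠ[𝓝 t] fun _ => u0 := by
        filter_upwards [Iio_mem_nhds hlt] with s hs
        rw [hy, if_pos (le_of_lt hs)]
      have hd0 : HasDerivAt (fun _ : ℝ => u0) d t := by
        rwa [← hev.hasDerivAt_iff]
      have : d = 0 := hd0.unique (hasDerivAt_const t u0)
      simp [this]
    · -- y locally affine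
      set c : ℝ := 1 / (1 - t0) with hc
      have hcpos : 0 < c := by positivity
      have hev : y =ᶠ[𝓝 t] fun s => u0 + ((s - t0) / (1 - t0)) • (b - u0) := by
        filter_upwards [Ioi_mem_nhds hgt] with s hs
        rw [hy, if_neg (not_le.mpr hs)]
      have hg : HasDerivAt (fun s : ℝ => u0 + ((s - t0) / (1 - t0)) • (b - u0))
          (c • (b - u0)) t := by
        have h1 : HasDerivAt (fun s : ℝ => (s - t0) / (1 - t0)) c t := by
          simpa [hc] using ((hasDerivAt_id t).sub_const t0).div_const (1 - t0)
        exact (h1.smul_const (b - u0)).const_add u0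
      have hdg : HasDerivAt y (c • (b - u0)) t := by
        rwa [hev.hasDerivAt_iff]
      have hdeq : d = c • (b - u0) := hd.unique hdg
      -- extract the B-part of v
      rw [hG] at hv
      obtain ⟨w, hw, e, he, hwe⟩ := Set.mem_add.mp hv.2
      rw [Metric.mem_closedBall, dist_zero_right] at he
      -- y t
      have hyt : y t = u0 + ((t - t0) / (1 - t0)) • (b - u0) := by
        rw [hy, if_neg (not_le.mpr hgt)]
      set s : ℝ := (t - t0) / (1 - t0) with hs
      have hs1 : (1 - t) / (1 - t0) = 1 - s := by
        rw [hs]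
        field_simp
        ring
      have hvy : v - y t = (w - b) + e + (1 - s) • (b - u0) := by
        rw [← hwe, hyt]
        have h3 : (1 - s) • (b - u0) = (b - u0) - s • (b - u0) := by
          rw [sub_smul, one_smul]
        rw [h3]
        abel
      have hkey : ⟪u0 - b, v - y t⟫ ≤ 0 := by
        rw [hvy, inner_add_right, inner_add_right, real_inner_smul_right]
        have hA : ⟪u0 - b, w - b⟫ ≤ 0 := hproj w hw
        have hB : ⟪u0 - b, e⟫ ≤ ‖u0 - b‖ * ‖e‖ := real_inner_le_norm _ _
        have hC : ⟪u0 - b, b - u0⟫ = -(‖u0 - b‖ ^ 2) := by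
          rw [show b - u0 = -(u0 - b) by abel, inner_neg_right, real_inner_self_eq_norm_sq]
        rw [hC]
        have hs1' : 0 ≤ 1 - s := by
          rw [← hs1]
          exact div_nonneg (by linarith) h1t0.le
        have hBe : ‖u0 - b‖ * ‖e‖ ≤ (1 - t0) * ρ * ((1 - t) * ρ) := by
          rw [ht0eq]
          exact mul_le_mul_of_nonneg_left he (by positivity)
        have hCe : (1 - s) * ‖u0 - b‖ ^ 2 = (1 - t) * ((1 - t0) * ρ ^ 2) := by
          rw [ht0eq, ← hs1]
          field_simp
        nlinarith [hA, hB]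
      rw [hdeq, ← smul_neg, neg_sub, real_inner_smul_left]
      exact mul_nonpos_of_nonneg_of_nonpos hcpos.le hkey
end

section
/- Let H be a real Hilbert space, T > 0, and let C : [0,T] → Conv_H be Lipschitz with respect to the Hausdorff distance. Suppose y : [0,T] → H is absolutely continuous (W^{1,1}), y(t) ∈ C(t) for all t, and y'(t) + ∂I_{C(t)}(y(t)) ∋ 0 for a.e. t. Then y is Lipschitz and Lip(y) ≤ Lip(C), i.e. ‖y(t) - y(s)‖ ≤ Lip(C)·|t - s| for all s, t ∈ [0,T]. -/
open Set Filter Topology MeasureTheory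
open scoped RealInnerProductSpace

theorem ae_left_quot_tendsto {E : Type*} [NormedAddCommGroup E] [NormedSpace ℝ E]
    [CompleteSpace E]
    {g : ℝ → E} (hg : MeasureTheory.LocallyIntegrable g MeasureTheory.volume) :
    ∀ᵐ t ∂(MeasureTheory.volume : Measure ℝ),
      Tendsto (fun k : ℝ => k⁻¹ • (∫ s in (t - k)..t, g s)) (𝓝[>] 0) (𝓝 (g t)) := by
  filter_upwards [IsUnifLocDoublingMeasure.ae_tendsto_average_norm_sub
    (MeasureTheory.volume : Measure ℝ) hg 1] with t ht
  have hδ : Tendsto (fun k : ℝ => k / 2) (𝓝[>] 0) (𝓝[>] 0) := by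
    apply tendsto_nhdsWithin_of_tendsto_nhds_of_eventually_within
    · simpa using (tendsto_id (x := 𝓝 (0:ℝ))).div_const 2 |>.mono_left nhdsWithin_le_nhds
    · filter_upwards [self_mem_nhdsWithin] with k hk
      exact (div_pos hk two_pos : (0:ℝ) < k / 2)
  have hx : ∀ᶠ k : ℝ in 𝓝[>] 0, t ∈ Metric.closedBall (t - k / 2) (1 * (k / 2)) := by
    filter_upwards [self_mem_nhdsWithin] with k (hk : 0 < k)
    simp only [Metric.mem_closedBall, one_mul, Real.dist_eq]
    rw [show t - (t - k / 2) = k / 2 by ring, abs_of_pos (by linarith)]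
  have key := ht (fun k : ℝ => t - k / 2) (fun k => k / 2) hδ hx
  rw [tendsto_iff_norm_sub_tendsto_zero]
  apply squeeze_zero' ?_ ?_ key
  · filter_upwards with k using norm_nonneg _
  · filter_upwards [self_mem_nhdsWithin] with k (hk : 0 < k)
    have hIcc : MeasureTheory.IntegrableOn g (Set.Icc (t - k) t) :=
      hg.integrableOn_isCompact isCompact_Icc
    have hii : IntervalIntegrable g MeasureTheory.volume (t - k) t :=
      (intervalIntegrable_iff_integrableOn_Ioc_of_le (by linarith)).2
        (hIcc.mono_set Set.Ioc_subset_Icc_self)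
    have hball : Metric.closedBall (t - k / 2) (k / 2) = Set.Icc (t - k) t := by
      rw [Real.closedBall_eq_Icc]
      congr 1 <;> ring
    rw [hball, setAverage_eq, Real.volume_real_Icc_of_le (by linarith : t - k ≤ t),
      show t - (t - k) = k by ring]
    have h1 : (∫ s in (t - k)..t, g s) - k • g t = ∫ s in (t - k)..t, (g s - g t) := by
      rw [intervalIntegral.integral_sub hii intervalIntegrable_const,
        intervalIntegral.integral_const, show t - (t - k) = k by ring]
    have h2 : k⁻¹ • (∫ s in (t - k)..t, g s) - g t
        = k⁻¹ • ((∫ s in (t - k)..t, g s) - k • g t) := by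
      rw [smul_sub, smul_smul, inv_mul_cancel₀ hk.ne', one_smul]
    rw [h2, h1, norm_smul, norm_inv, Real.norm_eq_abs, abs_of_pos hk, smul_eq_mul]
    have h3 : ‖∫ s in (t - k)..t, (g s - g t)‖ ≤ ∫ x in Set.Icc (t - k) t, ‖g x - g t‖ := by
      refine (intervalIntegral.norm_integral_le_integral_norm (by linarith)).trans ?_
      rw [intervalIntegral.integral_of_le (by linarith),
        MeasureTheory.integral_Icc_eq_integral_Ioc]
    exact mul_le_mul_of_nonneg_left h3 (by positivity)

/-- If `C : [0,T] → Conv_H` is Lipschitz (constant `L`) for the Hausdorff distance and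
`y ∈ W^{1,1}(0,T;H)` solves the sweeping process `y(t) ∈ C(t)`,
`y'(t) + N_{C(t)}(y(t)) ∋ 0` a.e., then `y` is Lipschitz with constant at most `L`. -/
theorem stmt_10 {H : Type*} [NormedAddCommGroup H] [InnerProductSpace ℝ H] [CompleteSpace H]
    (T : ℝ) (hT : 0 < T)
    (C : ℝ → Set H)
    (hC : ∀ t ∈ Set.Icc 0 T, (C t).Nonempty ∧ IsClosed (C t) ∧ Convex ℝ (C t))
    (L : ℝ) (hL : 0 ≤ L)
    (hClip : ∀ s ∈ Set.Icc 0 T, ∀ t ∈ Set.Icc 0 T,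
        EMetric.hausdorffEdist (C s) (C t) ≤ ENNReal.ofReal (L * |t - s|))
    (y y' : ℝ → H)
    (hint : IntervalIntegrable y' MeasureTheory.volume 0 T)
    (hy : ∀ t ∈ Set.Icc 0 T, y t = y 0 + ∫ s in (0:ℝ)..t, y' s)
    (hmem : ∀ t ∈ Set.Icc 0 T, y t ∈ C t)
    (hincl : ∀ᵐ t ∂(MeasureTheory.volume.restrict (Set.Ioo 0 T)),
        ∀ v ∈ C t, ⟪-(y' t), v - y t⟫ ≤ 0) :
    ∀ s ∈ Set.Icc 0 T, ∀ t ∈ Set.Icc 0 T, ‖y t - y s‖ ≤ L * |t - s| := by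
  have hT' : (0:ℝ) ≤ T := hT.le
  -- interval integrability on subintervals
  have hyii : ∀ a ∈ Set.Icc 0 T, ∀ b ∈ Set.Icc 0 T,
      IntervalIntegrable y' MeasureTheory.volume a b := by
    intro a ha b hb
    refine hint.mono_set ?_
    rw [Set.uIcc_of_le hT']
    exact Set.uIcc_subset_Icc ha hb
  have hydiff : ∀ a ∈ Set.Icc 0 T, ∀ b ∈ Set.Icc 0 T, y b - y a = ∫ u in a..b, y' u := by
    intro a ha b hb
    rw [hy b hb, hy a ha, add_sub_add_left_eq_sub]
    exact intervalIntegral.integral_interval_sub_left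
      (hyii 0 (Set.left_mem_Icc.2 hT') b hb) (hyii 0 (Set.left_mem_Icc.2 hT') a ha)
  -- the indicator function
  set g : ℝ → H := (Set.Ioo 0 T).indicator y' with hg_def
  have hIoc : MeasureTheory.IntegrableOn y' (Set.Ioc 0 T) := by
    rwa [intervalIntegrable_iff_integrableOn_Ioc_of_le hT'] at hint
  have hgint : MeasureTheory.Integrable g := by
    rw [hg_def, MeasureTheory.integrable_indicator_iff measurableSet_Ioo]
    exact hIoc.mono_set Set.Ioo_subset_Ioc_self
  have hgloc := hgint.locallyIntegrable
  rw [MeasureTheory.ae_restrict_iff' measurableSet_Ioo] at hincl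
  -- a.e. bound on the derivative
  have hbound : ∀ᵐ x ∂(MeasureTheory.volume : Measure ℝ),
      x ∈ Set.Ioo 0 T → ‖y' x‖ ≤ L := by
    filter_upwards [hincl, ae_left_quot_tendsto hgloc] with t h1 h2
    intro ht
    have ht0 := ht.1
    have htT := ht.2
    -- difference quotient convergence for y
    have key : Tendsto (fun k : ℝ => k⁻¹ • (y t - y (t - k))) (𝓝[>] 0) (𝓝 (y' t)) := by
      rw [show y' t = g t by rw [hg_def, Set.indicator_of_mem ht]]
      refine h2.congr' ?_
      filter_upwards [Ioo_mem_nhdsGT_of_mem (Set.mem_Ico.2 ⟨le_rfl, ht0⟩)] with k hk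
      obtain ⟨hk0, hkt⟩ := hk
      have htk : t - k ∈ Set.Icc 0 T := ⟨by linarith, by linarith⟩
      have hgy : (∫ s in (t - k)..t, g s) = ∫ s in (t - k)..t, y' s := by
        apply intervalIntegral.integral_congr
        intro x hx
        rw [Set.uIcc_of_le (by linarith : t - k ≤ t)] at hx
        exact Set.indicator_of_mem (show x ∈ Set.Ioo 0 T from ⟨by linarith [hx.1], lt_of_le_of_lt hx.2 htT⟩) y'
      rw [hgy, ← hydiff (t - k) htk t ⟨ht0.le, htT.le⟩]
    -- per-epsilon inequality
    have heps : ∀ ε > (0:ℝ), ⟪y' t, y' t⟫ ≤ ‖y' t‖ * (L + ε) := by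
      intro ε hε
      refine le_of_tendsto (tendsto_const_nhds.inner key) ?_
      filter_upwards [Ioo_mem_nhdsGT_of_mem (Set.mem_Ico.2 ⟨le_rfl, ht0⟩)] with k hk
      obtain ⟨hk0, hkt⟩ := hk
      have htk : t - k ∈ Set.Icc 0 T := ⟨by linarith, by linarith⟩
      have htI : t ∈ Set.Icc 0 T := ⟨ht0.le, htT.le⟩
      -- find a nearby point in C t
      have hed : EMetric.infEdist (y (t - k)) (C t) < ENNReal.ofReal ((L + ε) * k) := by
        refine lt_of_le_of_lt
          ((EMetric.infEdist_le_hausdorffEdist_of_mem (hmem (t - k) htk)).trans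
            (hClip (t - k) htk t htI)) ?_
        rw [show t - (t - k) = k by ring, abs_of_pos hk0]
        exact ENNReal.ofReal_lt_ofReal_iff (by positivity) |>.2
          (by nlinarith)
      obtain ⟨v, hvC, hve⟩ := EMetric.infEdist_lt_iff.mp hed
      have hvd : ‖y (t - k) - v‖ < (L + ε) * k := by
        rw [← dist_eq_norm]
        exact edist_lt_ofReal.mp hve
      have hv0 : ⟪y' t, y t - v⟫ ≤ 0 := by
        have := h1 ⟨ht0, htT⟩ v hvC
        rw [inner_neg_left, neg_nonpos] at this
        calc ⟪y' t, y t - v⟫ = -⟪y' t, v - y t⟫ := by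
              rw [← inner_neg_right, neg_sub]
          _ ≤ 0 := by linarith [this]
      have hsplit : ⟪y' t, y t - y (t - k)⟫
          = ⟪y' t, y t - v⟫ + ⟪y' t, v - y (t - k)⟫ := by
        rw [← inner_add_right, sub_add_sub_cancel]
      have hbd : ⟪y' t, y t - y (t - k)⟫ ≤ ‖y' t‖ * ((L + ε) * k) := by
        rw [hsplit]
        have h4 : ⟪y' t, v - y (t - k)⟫ ≤ ‖y' t‖ * ‖v - y (t - k)‖ :=
          real_inner_le_norm _ _
        have h5 : ‖v - y (t - k)‖ ≤ (L + ε) * k := by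
          rw [norm_sub_rev]; exact hvd.le
        nlinarith [norm_nonneg (y' t)]
      calc ⟪y' t, k⁻¹ • (y t - y (t - k))⟫
          = k⁻¹ * ⟪y' t, y t - y (t - k)⟫ := real_inner_smul_right _ _ _
        _ ≤ k⁻¹ * (‖y' t‖ * ((L + ε) * k)) := by
            exact mul_le_mul_of_nonneg_left hbd (by positivity)
        _ = ‖y' t‖ * (L + ε) := by field_simp
    -- conclude the norm bound
    rw [real_inner_self_eq_norm_sq] at heps
    by_contra hcon
    push_neg at hcon
    have hc0 : 0 < ‖y' t‖ := lt_of_le_of_lt hL hcon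
    have := heps ((‖y' t‖ - L) / 2) (by linarith)
    nlinarith
  -- final Lipschitz estimate
  intro s hs t ht
  rw [show y t - y s = ∫ u in s..t, y' u from hydiff s hs t ht]
  apply intervalIntegral.norm_integral_le_of_norm_le_const_ae
  have hne : ∀ᵐ x : ℝ ∂(MeasureTheory.volume : Measure ℝ), x ≠ 0 ∧ x ≠ T := by
    have h0 : (MeasureTheory.volume : Measure ℝ) ({0, T} : Set ℝ) = 0 :=
      measure_union_null (measure_singleton 0) (measure_singleton T)
    filter_upwards [MeasureTheory.compl_mem_ae_iff.2 h0] with x hx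
    simp only [Set.mem_compl_iff, Set.mem_insert_iff, Set.mem_singleton_iff, not_or] at hx
    exact hx
  filter_upwards [hbound, hne] with x hx ⟨hx0, hxT⟩ hxI
  apply hx
  rw [Set.mem_uIoc] at hxI
  constructor
  · rcases hxI with ⟨h1, _⟩ | ⟨h1, _⟩
    · exact lt_of_le_of_lt hs.1 h1
    · exact lt_of_le_of_lt ht.1 h1
  · rcases hxI with ⟨_, h2⟩ | ⟨_, h2⟩
    · exact lt_of_le_of_ne (h2.trans ht.2) hxT
    · exact lt_of_le_of_ne (h2.trans hs.2) hxT
end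

section
/- Let H be a real Hilbert space, Z ⊆ H nonempty closed convex, T > 0, z₀ ∈ Z, and u ∈ W^{1,1}(0,T;H). Suppose y₁, y₂ ∈ W^{1,1}(0,T;H) both satisfy: u(t) - y_i(t) ∈ Z for all t ∈ [0,T], ⟨z - u(t) + y_i(t), y_i'(t)⟩ ≤ 0 for all z ∈ Z and a.e. t, and u(0) - y_i(0) = z₀. Then y₁ = y₂. -/
open Set Filter Topology MeasureTheory
open scoped RealInnerProductSpace

theorem key_identity {H : Type*} [NormedAddCommGroup H] [InnerProductSpace ℝ H] [CompleteSpace H]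
    (t : ℝ) (h : ℝ → H) (hh : IntegrableOn h (Set.Ioc 0 t)) :
    ⟪∫ s in Set.Ioc (0:ℝ) t, h s, ∫ s in Set.Ioc (0:ℝ) t, h s⟫
      = 2 * ∫ r in Set.Ioc (0:ℝ) t, ⟪h r, ∫ s in Set.Ioc (0:ℝ) r, h s⟫ := by
  set μ := volume.restrict (Set.Ioc (0:ℝ) t) with hμdef
  have hμ : Integrable h μ := hh
  set G : ℝ × ℝ → ℝ := fun p => ⟪h p.1, h p.2⟫ with hGdef
  have hGm : AEStronglyMeasurable G (μ.prod μ) := (hμ.1.comp_fst).inner (hμ.1.comp_snd)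
  have hG : Integrable G (μ.prod μ) := by
    refine Integrable.mono' (hμ.norm.mul_prod hμ.norm) hGm ?_
    filter_upwards with p
    simpa [hGdef] using abs_real_inner_le_norm (h p.1) (h p.2)
  set S : Set (ℝ × ℝ) := {p | p.1 < p.2} with hSdef
  have hS : MeasurableSet S := measurableSet_lt measurable_fst measurable_snd
  have step0 : ∫ p, G p ∂(μ.prod μ) = ⟪∫ s, h s ∂μ, ∫ s, h s ∂μ⟫ := by
    rw [integral_prod _ hG]
    have h1 : ∀ r : ℝ, ∫ s, G (r, s) ∂μ = ⟪h r, ∫ s, h s ∂μ⟫ := fun r =>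
      integral_inner hμ (h r)
    simp_rw [h1]
    have h2 : (fun r => ⟪h r, ∫ s, h s ∂μ⟫) = fun r => ⟪(∫ s, h s ∂μ), h r⟫ :=
      funext fun r => real_inner_comm _ _
    rw [h2, integral_inner hμ]
  have piece2 : ∫ p in Sᶜ, G p ∂(μ.prod μ)
      = ∫ r in Set.Ioc (0:ℝ) t, ⟪h r, ∫ s in Set.Ioc (0:ℝ) r, h s⟫ := by
    rw [← integral_indicator hS.compl, integral_prod _ (hG.indicator hS.compl)]
    refine integral_congr_ae ?_
    filter_upwards [ae_restrict_mem measurableSet_Ioc] with r hr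
    have hind : ∀ s : ℝ, Sᶜ.indicator G (r, s)
        = (Set.Iic r).indicator (fun s => ⟪h r, h s⟫) s := by
      intro s
      by_cases hs : s ≤ r
      · simp [Set.indicator, hSdef, hs, not_lt.mpr hs, hGdef]
      · simp [Set.indicator, hSdef, hs, lt_of_not_ge hs, hGdef]
    simp_rw [hind]
    rw [integral_indicator measurableSet_Iic, hμdef,
      Measure.restrict_restrict measurableSet_Iic]
    have hset : Set.Iic r ∩ Set.Ioc 0 t = Set.Ioc 0 r := by
      ext s
      constructor
      · rintro ⟨hs1, hs2, _⟩; exact ⟨hs2, hs1⟩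
      · rintro ⟨hs1, hs2⟩; exact ⟨hs2, hs1, hs2.trans hr.2⟩
    rw [hset, integral_inner (hh.mono_set (Set.Ioc_subset_Ioc_right hr.2))]
  have piece1 : ∫ p in S, G p ∂(μ.prod μ)
      = ∫ s in Set.Ioc (0:ℝ) t, ⟪h s, ∫ r in Set.Ioc (0:ℝ) s, h r⟫ := by
    rw [← integral_indicator hS, integral_prod_symm _ (hG.indicator hS)]
    refine integral_congr_ae ?_
    filter_upwards [ae_restrict_mem measurableSet_Ioc] with s hs
    have hind : ∀ r : ℝ, S.indicator G (r, s)
        = (Set.Iio s).indicator (fun r => ⟪h s, h r⟫) r := by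
      intro r
      by_cases hrs : r < s
      · simp [Set.indicator, hSdef, hrs, hGdef, real_inner_comm (h r) (h s)]
      · simp [Set.indicator, hSdef, hrs, hGdef]
    simp_rw [hind]
    rw [integral_indicator measurableSet_Iio, hμdef,
      Measure.restrict_restrict measurableSet_Iio]
    have hset : Set.Iio s ∩ Set.Ioc 0 t = Set.Ioo 0 s := by
      ext r
      constructor
      · rintro ⟨hr1, hr2, _⟩; exact ⟨hr2, hr1⟩
      · rintro ⟨hr1, hr2⟩; exact ⟨hr2, hr1, hr2.le.trans hs.2⟩
    rw [hset, ← MeasureTheory.integral_Ioc_eq_integral_Ioo,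
      integral_inner (hh.mono_set (Set.Ioc_subset_Ioc_right hs.2))]
  have hsplit := integral_add_compl hS hG
  calc ⟪∫ s in Set.Ioc (0:ℝ) t, h s, ∫ s in Set.Ioc (0:ℝ) t, h s⟫
      = ∫ p, G p ∂(μ.prod μ) := step0.symm
    _ = (∫ p in S, G p ∂(μ.prod μ)) + ∫ p in Sᶜ, G p ∂(μ.prod μ) := hsplit.symm
    _ = 2 * ∫ r in Set.Ioc (0:ℝ) t, ⟪h r, ∫ s in Set.Ioc (0:ℝ) r, h s⟫ := by
        rw [piece1, piece2]
        have : ∀ s : ℝ, ⟪h s, ∫ r in Set.Ioc (0:ℝ) s, h r⟫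
            = ⟪h s, ∫ r in Set.Ioc (0:ℝ) s, h r⟫ := fun _ => rfl
        ring

/-- Uniqueness for the play operator: two `W^{1,1}` solutions of the evolution variational
inequality `u(t) - y(t) ∈ Z`, `⟪z - u(t) + y(t), y'(t)⟫ ≤ 0` for all `z ∈ Z` a.e., with the
same initial condition `u(0) - y(0) = z₀`, coincide on `[0,T]`. -/
theorem stmt_11 {H : Type*} [NormedAddCommGroup H] [InnerProductSpace ℝ H] [CompleteSpace H]
    (Z : Set H) (hZne : Z.Nonempty) (hZcl : IsClosed Z) (hZcv : Convex ℝ Z)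
    (T : ℝ) (hT : 0 < T) (z0 : H) (hz0 : z0 ∈ Z)
    (u u' : ℝ → H)
    (huint : IntervalIntegrable u' MeasureTheory.volume 0 T)
    (hu : ∀ t ∈ Set.Icc 0 T, u t = u 0 + ∫ s in (0:ℝ)..t, u' s)
    (y₁ y₂ v₁ v₂ : ℝ → H)
    (h1int : IntervalIntegrable v₁ MeasureTheory.volume 0 T)
    (h2int : IntervalIntegrable v₂ MeasureTheory.volume 0 T)
    (h1 : ∀ t ∈ Set.Icc 0 T, y₁ t = y₁ 0 + ∫ s in (0:ℝ)..t, v₁ s)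
    (h2 : ∀ t ∈ Set.Icc 0 T, y₂ t = y₂ 0 + ∫ s in (0:ℝ)..t, v₂ s)
    (h1mem : ∀ t ∈ Set.Icc 0 T, u t - y₁ t ∈ Z)
    (h2mem : ∀ t ∈ Set.Icc 0 T, u t - y₂ t ∈ Z)
    (h1var : ∀ᵐ t ∂(MeasureTheory.volume.restrict (Set.Ioo 0 T)),
        ∀ z ∈ Z, ⟪z - u t + y₁ t, v₁ t⟫ ≤ 0)
    (h2var : ∀ᵐ t ∂(MeasureTheory.volume.restrict (Set.Ioo 0 T)),
        ∀ z ∈ Z, ⟪z - u t + y₂ t, v₂ t⟫ ≤ 0)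
    (h1ic : u 0 - y₁ 0 = z0) (h2ic : u 0 - y₂ 0 = z0) :
    Set.EqOn y₁ y₂ (Set.Icc 0 T) := by
  have hy0 : y₁ 0 = y₂ 0 := by
    have e : u 0 - y₁ 0 = u 0 - y₂ 0 := h1ic.trans h2ic.symm
    have e1 : y₁ 0 = u 0 - (u 0 - y₁ 0) := by abel
    rw [e1, e]; abel
  intro t ht
  have hTle : (0:ℝ) ≤ T := hT.le
  have hvint : IntervalIntegrable (fun s => v₁ s - v₂ s) volume 0 T := h1int.sub h2int
  have hhT : IntegrableOn (fun s => v₁ s - v₂ s) (Set.Ioc 0 T) volume := hvint.1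
  have hht : IntegrableOn (fun s => v₁ s - v₂ s) (Set.Ioc 0 t) volume :=
    hhT.mono_set (Set.Ioc_subset_Ioc_right ht.2)
  have hw : ∀ r ∈ Set.Icc (0:ℝ) T, y₁ r - y₂ r = ∫ s in Set.Ioc (0:ℝ) r, (v₁ s - v₂ s) := by
    intro r hr
    have hsub : Set.uIcc 0 r ⊆ Set.uIcc 0 T := by
      rw [Set.uIcc_of_le hr.1, Set.uIcc_of_le hTle]
      exact Set.Icc_subset_Icc le_rfl hr.2
    have i1 : IntervalIntegrable v₁ volume 0 r := h1int.mono_set hsub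
    have i2 : IntervalIntegrable v₂ volume 0 r := h2int.mono_set hsub
    rw [h1 r hr, h2 r hr, hy0]
    have e : (y₂ 0 + ∫ s in (0:ℝ)..r, v₁ s) - (y₂ 0 + ∫ s in (0:ℝ)..r, v₂ s)
        = (∫ s in (0:ℝ)..r, v₁ s) - ∫ s in (0:ℝ)..r, v₂ s := by abel
    rw [e, ← intervalIntegral.integral_sub i1 i2, intervalIntegral.integral_of_le hr.1]
  have hae : ∀ᵐ r ∂(volume.restrict (Set.Ioc (0:ℝ) t)),
      ⟪v₁ r - v₂ r, ∫ s in Set.Ioc (0:ℝ) r, (v₁ s - v₂ s)⟫ ≤ 0 := by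
    have base : ∀ᵐ r ∂(volume.restrict (Set.Ioo (0:ℝ) T)),
        ⟪v₁ r - v₂ r, ∫ s in Set.Ioc (0:ℝ) r, (v₁ s - v₂ s)⟫ ≤ 0 := by
      filter_upwards [h1var, h2var, ae_restrict_mem measurableSet_Ioo] with r hr1 hr2 hrm
      have hrI : r ∈ Set.Icc 0 T := Set.Ioo_subset_Icc_self hrm
      have e1 := hr1 (u r - y₂ r) (h2mem r hrI)
      have e2 := hr2 (u r - y₁ r) (h1mem r hrI)
      have a1 : u r - y₂ r - u r + y₁ r = y₁ r - y₂ r := by abel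
      have a2 : u r - y₁ r - u r + y₂ r = y₂ r - y₁ r := by abel
      rw [a1] at e1
      rw [a2] at e2
      have e3 : ⟪y₂ r - y₁ r, v₂ r⟫ = -⟪y₁ r - y₂ r, v₂ r⟫ := by
        rw [← inner_neg_left]
        congr 1
        abel
      rw [e3] at e2
      have key : ⟪y₁ r - y₂ r, v₁ r - v₂ r⟫ ≤ 0 := by
        rw [inner_sub_right]
        linarith
      calc ⟪v₁ r - v₂ r, ∫ s in Set.Ioc (0:ℝ) r, (v₁ s - v₂ s)⟫
          = ⟪y₁ r - y₂ r, v₁ r - v₂ r⟫ := by rw [← hw r hrI, real_inner_comm]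
        _ ≤ 0 := key
    have base' := ae_restrict_of_ae_restrict_of_subset (Set.Ioo_subset_Ioo_right ht.2) base
    rwa [Measure.restrict_congr_set Ioo_ae_eq_Ioc] at base'
  have hint_le : ∫ r in Set.Ioc (0:ℝ) t,
      ⟪v₁ r - v₂ r, ∫ s in Set.Ioc (0:ℝ) r, (v₁ s - v₂ s)⟫ ≤ 0 :=
    integral_nonpos_of_ae hae
  have hkey := key_identity t (fun s => v₁ s - v₂ s) hht
  have hnp : ⟪y₁ t - y₂ t, y₁ t - y₂ t⟫ ≤ 0 := by
    rw [hw t ht, hkey]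
    linarith
  have hz : y₁ t - y₂ t = 0 := real_inner_self_nonpos.mp hnp
  exact sub_eq_zero.mp hz
end

section
/- Let H be a real Hilbert space, Z ⊆ H nonempty closed convex, z₀ ∈ Z, u ∈ W^{1,1}(0,T;H), and let y ∈ W^{1,1}(0,T;H) be the solution of the play problem: u(t) - y(t) ∈ Z for all t, ⟨z - u(t) + y(t), y'(t)⟩ ≤ 0 for all z ∈ Z and a.e. t, u(0) - y(0) = z₀. Set x := u - y. Then ⟨x'(t), y'(t)⟩ = 0 for a.e. t ∈ [0,T]; consequently ‖2y'(t) - u'(t)‖ = ‖u'(t)‖ for a.e. t ∈ [0,T]. -/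
open Set Filter Topology MeasureTheory
open scoped RealInnerProductSpace

lemma half_tendsto' : Tendsto (fun h : ℝ => h / 2) (𝓝[>] 0) (𝓝[>] 0) := by
  apply tendsto_nhdsWithin_of_tendsto_nhds_of_eventually_within
  · have := (continuous_id.div_const (2:ℝ)).tendsto 0
    simpa using this.mono_left nhdsWithin_le_nhds
  · filter_upwards [self_mem_nhdsWithin] with h (hh : 0 < h)
    exact mem_Ioi.mpr (by linarith)

lemma ae_tendsto_sides' {H : Type*} [NormedAddCommGroup H] [NormedSpace ℝ H] [CompleteSpace H]
    {g : ℝ → H} (hg : Integrable g volume) :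
    ∀ᵐ t ∂(volume : Measure ℝ),
      Tendsto (fun h : ℝ => h⁻¹ • ∫ r in Ioc t (t+h), g r) (𝓝[>] 0) (𝓝 (g t)) ∧
      Tendsto (fun h : ℝ => h⁻¹ • ∫ r in Ioc (t-h) t, g r) (𝓝[>] 0) (𝓝 (g t)) := by
  filter_upwards [IsUnifLocDoublingMeasure.ae_tendsto_average (volume : Measure ℝ)
    hg.locallyIntegrable 1] with t ht
  have key : ∀ a b : ℝ, a < b →
      ⨍ y in Metric.closedBall ((a+b)/2) ((b-a)/2), g y = (b-a)⁻¹ • ∫ r in Ioc a b, g r := by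
    intro a b hab
    have hcb : Metric.closedBall ((a+b)/2) ((b-a)/2) = Icc a b := by
      rw [Real.closedBall_eq_Icc, show (a+b)/2 - (b-a)/2 = a by ring,
        show (a+b)/2 + (b-a)/2 = b by ring]
    rw [hcb, setAverage_eq, integral_Icc_eq_integral_Ioc, Real.volume_real_Icc_of_le hab.le]
  constructor
  · have h1 : Tendsto (fun h : ℝ => ⨍ y in Metric.closedBall (t + h/2) (h/2), g y)
        (𝓝[>] 0) (𝓝 (g t)) := by
      apply ht (fun h => t + h/2) (fun h => h/2) half_tendsto'
      filter_upwards [self_mem_nhdsWithin] with h (hh : 0 < h)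
      simp only [one_mul, Metric.mem_closedBall]
      rw [Real.dist_eq, abs_of_nonpos (by linarith)]; linarith
    apply h1.congr'
    filter_upwards [self_mem_nhdsWithin] with h (hh : 0 < h)
    have := key t (t+h) (by linarith)
    simp only [show (t + (t+h))/2 = t + h/2 by ring, show (t + h - t)/2 = h/2 by ring,
      show t + h - t = h by ring] at this
    exact this
  · have h1 : Tendsto (fun h : ℝ => ⨍ y in Metric.closedBall (t - h/2) (h/2), g y)
        (𝓝[>] 0) (𝓝 (g t)) := by
      apply ht (fun h => t - h/2) (fun h => h/2) half_tendsto'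
      filter_upwards [self_mem_nhdsWithin] with h (hh : 0 < h)
      simp only [one_mul, Metric.mem_closedBall]
      rw [Real.dist_eq, abs_of_nonneg (by linarith)]; linarith
    apply h1.congr'
    filter_upwards [self_mem_nhdsWithin] with h (hh : 0 < h)
    have := key (t-h) t (by linarith)
    simp only [show (t - h + t)/2 = t - h/2 by ring, show (t - (t-h))/2 = h/2 by ring,
      show t - (t-h) = h by ring] at this
    exact this

/-- For the solution `y` of the play problem with `W^{1,1}` input `u`, setting `x = u - y`
one has the a.e. orthogonality `⟪x'(t), y'(t)⟫ = 0`; consequently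
`‖2y'(t) - u'(t)‖ = ‖u'(t)‖` a.e. on `[0,T]`. -/
theorem stmt_12 {H : Type*} [NormedAddCommGroup H] [InnerProductSpace ℝ H] [CompleteSpace H]
    (Z : Set H) (hZne : Z.Nonempty) (hZcl : IsClosed Z) (hZcv : Convex ℝ Z)
    (T : ℝ) (hT : 0 < T) (z0 : H) (hz0 : z0 ∈ Z)
    (u u' : ℝ → H)
    (huint : IntervalIntegrable u' MeasureTheory.volume 0 T)
    (hu : ∀ t ∈ Set.Icc 0 T, u t = u 0 + ∫ s in (0:ℝ)..t, u' s)
    (y y' : ℝ → H)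
    (hyint : IntervalIntegrable y' MeasureTheory.volume 0 T)
    (hy : ∀ t ∈ Set.Icc 0 T, y t = y 0 + ∫ s in (0:ℝ)..t, y' s)
    (hmem : ∀ t ∈ Set.Icc 0 T, u t - y t ∈ Z)
    (hvar : ∀ᵐ t ∂(MeasureTheory.volume.restrict (Set.Ioo 0 T)),
        ∀ z ∈ Z, ⟪z - u t + y t, y' t⟫ ≤ 0)
    (hic : u 0 - y 0 = z0) :
    ∀ᵐ t ∂(MeasureTheory.volume.restrict (Set.Ioo 0 T)),
      ⟪u' t - y' t, y' t⟫ = 0 ∧ ‖(2:ℝ) • y' t - u' t‖ = ‖u' t‖ := by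
  set g : ℝ → H := fun r => u' r - y' r with hg_def
  -- interval integrability on subintervals
  have hsub : ∀ s ∈ Icc (0:ℝ) T, uIcc (0:ℝ) s ⊆ uIcc (0:ℝ) T := by
    intro s hs
    exact uIcc_subset_uIcc left_mem_uIcc (by rw [uIcc_of_le hT.le]; exact hs)
  have hgint : ∀ s ∈ Icc (0:ℝ) T, ∀ t ∈ Icc (0:ℝ) T, IntervalIntegrable g volume t s := by
    intro s hs t ht
    have h1 : uIcc t s ⊆ uIcc (0:ℝ) T :=
      uIcc_subset_uIcc (by rw [uIcc_of_le hT.le]; exact ht) (by rw [uIcc_of_le hT.le]; exact hs)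
    exact (huint.mono_set h1).sub (hyint.mono_set h1)
  -- key: increment identity
  have key : ∀ s ∈ Icc (0:ℝ) T, ∀ t ∈ Icc (0:ℝ) T,
      (u s - y s) - (u t - y t) = ∫ r in t..s, g r := by
    intro s hs t ht
    rw [hu s hs, hy s hs, hu t ht, hy t ht]
    have h1 : ∫ r in (0:ℝ)..s, g r
        = (∫ r in (0:ℝ)..s, u' r) - ∫ r in (0:ℝ)..s, y' r :=
      intervalIntegral.integral_sub (huint.mono_set (hsub s hs)) (hyint.mono_set (hsub s hs))
    have h2 : ∫ r in (0:ℝ)..t, g r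
        = (∫ r in (0:ℝ)..t, u' r) - ∫ r in (0:ℝ)..t, y' r :=
      intervalIntegral.integral_sub (huint.mono_set (hsub t ht)) (hyint.mono_set (hsub t ht))
    have h3 : (∫ r in (0:ℝ)..s, g r) - ∫ r in (0:ℝ)..t, g r = ∫ r in t..s, g r :=
      intervalIntegral.integral_interval_sub_left (hgint s hs 0 (left_mem_Icc.mpr hT.le))
        (hgint t ht 0 (left_mem_Icc.mpr hT.le))
    rw [← h3, h1, h2]; abel
  -- integrable globally via indicator
  have hgOn : IntegrableOn g (Ioc 0 T) volume := by
    have := (intervalIntegrable_iff_integrableOn_Ioc_of_le hT.le).mp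
      ((huint.mono_set (hsub T (right_mem_Icc.mpr hT.le))).sub
        (hyint.mono_set (hsub T (right_mem_Icc.mpr hT.le))))
    simpa using this
  set gt : ℝ → H := (Ioc (0:ℝ) T).indicator g with hgt_def
  have hgt : Integrable gt volume := hgOn.integrable_indicator measurableSet_Ioc
  filter_upwards [hvar, ae_restrict_mem measurableSet_Ioo,
    ae_restrict_of_ae (ae_tendsto_sides' hgt)] with t hvt htIoo hsides
  have htmem : t ∈ Icc (0:ℝ) T := ⟨htIoo.1.le, htIoo.2.le⟩
  have hgtt : gt t = g t := indicator_of_mem (mem_Ioc.mpr ⟨htIoo.1, htIoo.2.le⟩) g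
  rw [hgtt] at hsides
  set c : H := y' t with hc_def
  -- continuous inner with c
  have hcont : Continuous fun v : H => ⟪v, c⟫ := continuous_id.inner continuous_const
  -- RIGHT side
  have hevR : Ioo (0:ℝ) (T - t) ∈ 𝓝[>] (0:ℝ) :=
    Ioo_mem_nhdsGT_of_mem ⟨le_refl 0, by linarith [htIoo.2]⟩
  have hle : ⟪g t, c⟫ ≤ 0 := by
    have hlim : Tendsto (fun h : ℝ => ⟪h⁻¹ • ∫ r in Ioc t (t+h), gt r, c⟫)
        (𝓝[>] 0) (𝓝 ⟪g t, c⟫) := (hcont.tendsto _).comp hsides.1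
    refine le_of_tendsto hlim ?_
    filter_upwards [hevR] with h hh
    obtain ⟨hh0, hhT⟩ := hh
    have hthmem : t + h ∈ Icc (0:ℝ) T := ⟨by linarith [htIoo.1], by linarith⟩
    have hintEq : ∫ r in Ioc t (t+h), gt r = ∫ r in t..(t+h), g r := by
      rw [intervalIntegral.integral_of_le (by linarith)]
      apply setIntegral_congr_fun measurableSet_Ioc
      intro r hr
      exact indicator_of_mem (mem_Ioc.mpr ⟨lt_of_le_of_lt htIoo.1.le hr.1, le_trans hr.2 (by linarith)⟩) g
    have hineq : ⟪∫ r in t..(t+h), g r, c⟫ ≤ 0 := by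
      have hz : u (t+h) - y (t+h) ∈ Z := hmem _ hthmem
      have := hvt _ hz
      have heq : u (t+h) - y (t+h) - u t + y t = ∫ r in t..(t+h), g r := by
        rw [← key (t+h) hthmem t htmem]; abel
      rw [show u (t+h) - y (t+h) - u t + y t
          = u (t+h) - y (t+h) - (u t - y t) by abel] at heq
      rw [show (u (t+h) - y (t+h)) - u t + y t
          = u (t+h) - y (t+h) - (u t - y t) by abel, heq] at this
      exact this
    rw [hintEq, real_inner_smul_left]
    exact mul_nonpos_of_nonneg_of_nonpos (inv_nonneg.mpr hh0.le) hineq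
  -- LEFT side
  have hevL : Ioo (0:ℝ) t ∈ 𝓝[>] (0:ℝ) :=
    Ioo_mem_nhdsGT_of_mem ⟨le_refl 0, htIoo.1⟩
  have hge : 0 ≤ ⟪g t, c⟫ := by
    have hlim : Tendsto (fun h : ℝ => ⟪h⁻¹ • ∫ r in Ioc (t-h) t, gt r, c⟫)
        (𝓝[>] 0) (𝓝 ⟪g t, c⟫) := (hcont.tendsto _).comp hsides.2
    refine ge_of_tendsto hlim ?_
    filter_upwards [hevL] with h hh
    obtain ⟨hh0, hht⟩ := hh
    have hthmem : t - h ∈ Icc (0:ℝ) T := ⟨by linarith, by linarith [htIoo.2]⟩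
    have hintEq : ∫ r in Ioc (t-h) t, gt r = ∫ r in (t-h)..t, g r := by
      rw [intervalIntegral.integral_of_le (by linarith)]
      apply setIntegral_congr_fun measurableSet_Ioc
      intro r hr
      exact indicator_of_mem (mem_Ioc.mpr ⟨by linarith [hr.1], le_trans hr.2 htIoo.2.le⟩) g
    have hineq : 0 ≤ ⟪∫ r in (t-h)..t, g r, c⟫ := by
      have hz : u (t-h) - y (t-h) ∈ Z := hmem _ hthmem
      have h0 := hvt _ hz
      have heq : u (t-h) - y (t-h) - (u t - y t) = ∫ r in t..(t-h), g r :=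
        key (t-h) hthmem t htmem
      rw [show (u (t-h) - y (t-h)) - u t + y t
          = u (t-h) - y (t-h) - (u t - y t) by abel, heq] at h0
      rw [intervalIntegral.integral_symm] at h0
      rw [inner_neg_left] at h0
      linarith
    rw [hintEq, real_inner_smul_left]
    exact mul_nonneg (inv_nonneg.mpr hh0.le) hineq
  have horth : ⟪u' t - y' t, y' t⟫ = 0 := le_antisymm hle hge
  refine ⟨horth, ?_⟩
  -- norm identity
  have hinner : ⟪u' t, y' t⟫ = ⟪y' t, y' t⟫ := by
    have := horth
    rw [inner_sub_left] at this
    linarith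
  have hsq : ‖(2:ℝ) • y' t - u' t‖ ^ 2 = ‖u' t‖ ^ 2 := by
    rw [← real_inner_self_eq_norm_sq, ← real_inner_self_eq_norm_sq]
    simp only [inner_sub_left, inner_sub_right, real_inner_smul_left, real_inner_smul_right]
    have hcomm : ⟪y' t, u' t⟫ = ⟪u' t, y' t⟫ := real_inner_comm _ _
    linarith
  have := congrArg Real.sqrt hsq
  rwa [Real.sqrt_sq (norm_nonneg _), Real.sqrt_sq (norm_nonneg _)] at this
end

section
/- Let H be a real Hilbert space, I ⊆ ℝ an interval, w_n, w : I → H functions of bounded variation, and μ : B(I) → H a vector measure of bounded variation. If w_n → w uniformly on I and the measures Dw_n converge weakly to μ (in the sense that Λ(Dw_n) → Λ(μ) for every bounded linear functional Λ on the Banach space of H-valued measures of bounded variation with the total variation norm), then μ = Dw. -/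
open Set Filter Topology MeasureTheory ENNReal
open scoped Classical NNReal

/-- Left limit of `f` at `t` along the set `I`, with the convention that it equals `f t`
when there are no points of `I` below `t`. -/
noncomputable def olimL {H : Type*} [TopologicalSpace H] [Nonempty H]
    (f : ℝ → H) (I : Set ℝ) (t : ℝ) : H :=
  if (I ∩ Set.Iio t).Nonempty then limUnder (nhdsWithin t (I ∩ Set.Iio t)) f else f t

/-- Right limit of `f` at `t` along the set `I`, with the convention that it equals `f t`
when there are no points of `I` above `t`. -/
noncomputable def olimR {H : Type*} [TopologicalSpace H] [Nonempty H]
    (f : ℝ → H) (I : Set ℝ) (t : ℝ) : H :=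
  if (I ∩ Set.Ioi t).Nonempty then limUnder (nhdsWithin t (I ∩ Set.Ioi t)) f else f t

/-- Total variation (in `ℝ≥0∞`) of a vector measure: the supremum of `Σ ‖σ(Bᵢ)‖` over
finite disjoint families of Borel sets. -/
noncomputable def vmEVar {H : Type*} [NormedAddCommGroup H]
    (σ : MeasureTheory.VectorMeasure ℝ H) : ℝ≥0∞ :=
  ⨆ (n : ℕ) (B : Fin n → Set ℝ) (_ : ∀ i, MeasurableSet (B i))
    (_ : Pairwise fun i j => Disjoint (B i) (B j)), ∑ i, (‖σ (B i)‖₊ : ℝ≥0∞)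

/-- `σ` is the Lebesgue–Stieltjes (differential) measure `Df` of a `BV` function
`f : I → H`: it is concentrated on `I` and takes the canonical values, expressed through
one-sided limits of `f`, on all subintervals of `I`. -/
def IsDiffMeasure {H : Type*} [NormedAddCommGroup H]
    (I : Set ℝ) (f : ℝ → H) (μ : MeasureTheory.VectorMeasure ℝ H) : Prop :=
  (∀ B : Set ℝ, MeasurableSet B → B ∩ I = ∅ → μ B = 0) ∧
  (∀ c d : ℝ, c < d → Set.Ioo c d ⊆ I → μ (Set.Ioo c d) = olimL f I d - olimR f I c) ∧
  (∀ c d : ℝ, c < d → Set.Icc c d ⊆ I → μ (Set.Icc c d) = olimR f I d - olimL f I c) ∧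
  (∀ c d : ℝ, c < d → Set.Ico c d ⊆ I → μ (Set.Ico c d) = olimL f I d - olimL f I c) ∧
  (∀ c d : ℝ, c < d → Set.Ioc c d ⊆ I → μ (Set.Ioc c d) = olimR f I d - olimR f I c)



section Aux

variable {H : Type*} [NormedAddCommGroup H]

lemma nhds_Ioo_right_neBot {c d : ℝ} (h : c < d) : (𝓝[Set.Ioo c d] d).NeBot := by
  refine mem_closure_iff_nhdsWithin_neBot.1 ?_
  rw [closure_Ioo h.ne]
  exact right_mem_Icc.2 h.le

lemma nhds_Ioo_left_neBot {c d : ℝ} (h : c < d) : (𝓝[Set.Ioo c d] c).NeBot := by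
  refine mem_closure_iff_nhdsWithin_neBot.1 ?_
  rw [closure_Ioo h.ne]
  exact left_mem_Icc.2 h.le

lemma exists_tendsto_left [CompleteSpace H]
    {I : Set ℝ} {f : ℝ → H} (hf : BoundedVariationOn f I) (t : ℝ)
    (hne : (𝓝[I ∩ Set.Iio t] t).NeBot) :
    ∃ a, Tendsto f (𝓝[I ∩ Set.Iio t] t) (𝓝 a) := by
  haveI := hne
  set A := I ∩ Set.Iio t with hAdef
  set l := 𝓝[A] t with hldef
  have hA : A ∈ l := self_mem_nhdsWithin
  have hAne : A.Nonempty := Filter.nonempty_of_mem hA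
  suffices h : Cauchy (Filter.map f l) by
    obtain ⟨a, ha⟩ := CompleteSpace.complete h
    exact ⟨a, ha⟩
  set V : ℝ → ℝ≥0∞ := fun s => eVariationOn f (I ∩ Set.Iic s) with hVdef
  have hVT : ∀ s, V s ≤ eVariationOn f I := fun s => eVariationOn.mono f inter_subset_left
  have hVne : ∀ s, V s ≠ ⊤ := fun s => ne_top_of_le_ne_top hf (hVT s)
  set S : ℝ≥0∞ := ⨆ s ∈ A, V s with hSdef
  have hSle : S ≤ eVariationOn f I := iSup₂_le fun s _ => hVT s
  have hS : S ≠ ⊤ := ne_top_of_le_ne_top hf hSle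
  have key : ∀ x ∈ A, ∀ y ∈ A, x ≤ y → V x + edist (f x) (f y) ≤ V y := by
    intro x hx y hy hxy
    have h1 : edist (f x) (f y) ≤ eVariationOn f (I ∩ Set.Icc x y) :=
      eVariationOn.edist_le f ⟨hx.1, le_refl x, hxy⟩ ⟨hy.1, hxy, le_refl y⟩
    calc V x + edist (f x) (f y) ≤ V x + eVariationOn f (I ∩ Set.Icc x y) :=
          add_le_add_right h1 _
      _ ≤ eVariationOn f ((I ∩ Set.Iic x) ∪ (I ∩ Set.Icc x y)) :=
          eVariationOn.add_le_union f (fun a ha b hb => le_trans ha.2 hb.2.1)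
      _ ≤ V y := eVariationOn.mono f (by
          rintro z (⟨hz, hz'⟩ | ⟨hz, hz'⟩)
          · exact ⟨hz, le_trans hz' hxy⟩
          · exact ⟨hz, hz'.2⟩)
  refine EMetric.cauchy_iff.2 ⟨(hne.map f).ne', ?_⟩
  intro ε hε
  obtain ⟨s₀, hs₀A, hs₀⟩ : ∃ s₀ ∈ A, S < V s₀ + ε := by
    rcases lt_or_ge S ε with h | h
    · obtain ⟨s₀, hs₀⟩ := hAne
      exact ⟨s₀, hs₀, h.trans_le le_add_self⟩
    · have h0 : S ≠ 0 := fun h0 => hε.ne' (le_antisymm (h0 ▸ h) zero_le)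
      have hlt : S - ε < S := ENNReal.sub_lt_self hS h0 hε.ne'
      rw [hSdef] at hlt
      obtain ⟨s₀, hlt'⟩ := lt_iSup_iff.1 hlt
      obtain ⟨hs₀A, hlt''⟩ := lt_iSup_iff.1 hlt'
      exact ⟨s₀, hs₀A, (ENNReal.sub_lt_iff_lt_right (ne_top_of_le_ne_top hS h) h).1 hlt''⟩
  have hM : A ∩ Set.Ioi s₀ ∈ l :=
    inter_mem hA (nhdsWithin_le_nhds (isOpen_Ioi.mem_nhds hs₀A.2))
  refine ⟨f '' (A ∩ Set.Ioi s₀), image_mem_map hM, ?_⟩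
  have main : ∀ x ∈ A ∩ Set.Ioi s₀, ∀ y ∈ A ∩ Set.Ioi s₀, x ≤ y → edist (f x) (f y) < ε := by
    intro x hx y hy hxy
    have h1 := key x hx.1 y hy.1 hxy
    have h2 : V y ≤ S := le_iSup₂ (f := fun s (_ : s ∈ A) => V s) y hy.1
    have h3 : V s₀ ≤ V x :=
      eVariationOn.mono f (inter_subset_inter_right I (Set.Iic_subset_Iic.2 hx.2.le))
    have h4 : V x + edist (f x) (f y) < V x + ε :=
      lt_of_le_of_lt (h1.trans h2) (hs₀.trans_le (add_le_add_left h3 ε))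
    exact (ENNReal.add_lt_add_iff_left (hVne x)).1 h4
  rintro u ⟨x, hx, rfl⟩ v ⟨y, hy, rfl⟩
  rcases le_total x y with hxy | hxy
  · exact main x hx y hy hxy
  · rw [edist_comm]; exact main y hy x hx hxy

lemma exists_tendsto_right [CompleteSpace H]
    {I : Set ℝ} {f : ℝ → H} (hf : BoundedVariationOn f I) (t : ℝ)
    (hne : (𝓝[I ∩ Set.Ioi t] t).NeBot) :
    ∃ a, Tendsto f (𝓝[I ∩ Set.Ioi t] t) (𝓝 a) := by
  haveI := hne
  set A := I ∩ Set.Ioi t with hAdef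
  set l := 𝓝[A] t with hldef
  have hA : A ∈ l := self_mem_nhdsWithin
  have hAne : A.Nonempty := Filter.nonempty_of_mem hA
  suffices h : Cauchy (Filter.map f l) by
    obtain ⟨a, ha⟩ := CompleteSpace.complete h
    exact ⟨a, ha⟩
  set V : ℝ → ℝ≥0∞ := fun s => eVariationOn f (I ∩ Set.Ici s) with hVdef
  have hVT : ∀ s, V s ≤ eVariationOn f I := fun s => eVariationOn.mono f inter_subset_left
  have hVne : ∀ s, V s ≠ ⊤ := fun s => ne_top_of_le_ne_top hf (hVT s)
  set S : ℝ≥0∞ := ⨆ s ∈ A, V s with hSdef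
  have hSle : S ≤ eVariationOn f I := iSup₂_le fun s _ => hVT s
  have hS : S ≠ ⊤ := ne_top_of_le_ne_top hf hSle
  have key : ∀ x ∈ A, ∀ y ∈ A, x ≤ y → V y + edist (f x) (f y) ≤ V x := by
    intro x hx y hy hxy
    have h1 : edist (f x) (f y) ≤ eVariationOn f (I ∩ Set.Icc x y) :=
      eVariationOn.edist_le f ⟨hx.1, le_refl x, hxy⟩ ⟨hy.1, hxy, le_refl y⟩
    calc V y + edist (f x) (f y) ≤ V y + eVariationOn f (I ∩ Set.Icc x y) :=
          add_le_add_right h1 _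
      _ = eVariationOn f (I ∩ Set.Icc x y) + V y := add_comm _ _
      _ ≤ eVariationOn f ((I ∩ Set.Icc x y) ∪ (I ∩ Set.Ici y)) :=
          eVariationOn.add_le_union f (fun a ha b hb => le_trans ha.2.2 hb.2)
      _ ≤ V x := eVariationOn.mono f (by
          rintro z (⟨hz, hz'⟩ | ⟨hz, hz'⟩)
          · exact ⟨hz, hz'.1⟩
          · exact ⟨hz, le_trans hxy hz'⟩)
  refine EMetric.cauchy_iff.2 ⟨(hne.map f).ne', ?_⟩
  intro ε hε
  obtain ⟨s₀, hs₀A, hs₀⟩ : ∃ s₀ ∈ A, S < V s₀ + ε := by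
    rcases lt_or_ge S ε with h | h
    · obtain ⟨s₀, hs₀⟩ := hAne
      exact ⟨s₀, hs₀, h.trans_le le_add_self⟩
    · have h0 : S ≠ 0 := fun h0 => hε.ne' (le_antisymm (h0 ▸ h) zero_le)
      have hlt : S - ε < S := ENNReal.sub_lt_self hS h0 hε.ne'
      rw [hSdef] at hlt
      obtain ⟨s₀, hlt'⟩ := lt_iSup_iff.1 hlt
      obtain ⟨hs₀A, hlt''⟩ := lt_iSup_iff.1 hlt'
      exact ⟨s₀, hs₀A, (ENNReal.sub_lt_iff_lt_right (ne_top_of_le_ne_top hS h) h).1 hlt''⟩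
  have hM : A ∩ Set.Iio s₀ ∈ l :=
    inter_mem hA (nhdsWithin_le_nhds (isOpen_Iio.mem_nhds hs₀A.2))
  refine ⟨f '' (A ∩ Set.Iio s₀), image_mem_map hM, ?_⟩
  have main : ∀ x ∈ A ∩ Set.Iio s₀, ∀ y ∈ A ∩ Set.Iio s₀, x ≤ y → edist (f x) (f y) < ε := by
    intro x hx y hy hxy
    have h1 := key x hx.1 y hy.1 hxy
    have h2 : V x ≤ S := le_iSup₂ (f := fun s (_ : s ∈ A) => V s) x hx.1
    have h3 : V s₀ ≤ V y :=
      eVariationOn.mono f (inter_subset_inter_right I (Set.Ici_subset_Ici.2 hy.2.le))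
    have h4 : V y + edist (f x) (f y) < V y + ε :=
      lt_of_le_of_lt (h1.trans h2) (hs₀.trans_le (add_le_add_left h3 ε))
    exact (ENNReal.add_lt_add_iff_left (hVne y)).1 h4
  rintro u ⟨x, hx, rfl⟩ v ⟨y, hy, rfl⟩
  rcases le_total x y with hxy | hxy
  · exact main x hx y hy hxy
  · rw [edist_comm]; exact main y hy x hx hxy

lemma interchange_limits {I : Set ℝ} {w : ℝ → H} {wn : ℕ → ℝ → H}
    {l : Filter ℝ} [l.NeBot] (hl : ∀ᶠ x in l, x ∈ I)
    (hunif : TendstoUniformlyOn wn w atTop I)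
    {a : ℕ → H} {b : H} (ha : ∀ n, Tendsto (wn n) l (𝓝 (a n))) (hb : Tendsto w l (𝓝 b)) :
    Tendsto a atTop (𝓝 b) := by
  rw [Metric.tendsto_atTop]
  intro ε hε
  obtain ⟨N, hN⟩ := Filter.eventually_atTop.1
    ((Metric.tendstoUniformlyOn_iff.1 hunif) (ε / 2) (by positivity))
  refine ⟨N, fun n hn => ?_⟩
  have hd : Tendsto (fun x => dist (wn n x) (w x)) l (𝓝 (dist (a n) b)) := (ha n).dist hb
  have hbound : ∀ᶠ x in l, dist (wn n x) (w x) ≤ ε / 2 :=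
    hl.mono fun x hx => by
      have := hN n hn x hx
      rw [dist_comm] at this
      exact this.le
  have : dist (a n) b ≤ ε / 2 := le_of_tendsto hd hbound
  linarith

end Aux

section OlimConv

variable {H : Type*} [NormedAddCommGroup H] [CompleteSpace H]
variable {I : Set ℝ} {w : ℝ → H} {wn : ℕ → ℝ → H}

lemma olimL_tendsto (hw : BoundedVariationOn w I) (hwn : ∀ n, BoundedVariationOn (wn n) I)
    (hunif : TendstoUniformlyOn wn w atTop I) (t : ℝ)
    (h1 : (I ∩ Set.Iio t).Nonempty → (𝓝[I ∩ Set.Iio t] t).NeBot)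
    (h2 : ¬(I ∩ Set.Iio t).Nonempty → t ∈ I) :
    Tendsto (fun n => olimL (wn n) I t) atTop (𝓝 (olimL w I t)) := by
  by_cases h : (I ∩ Set.Iio t).Nonempty
  · haveI := h1 h
    obtain ⟨b, hb⟩ := exists_tendsto_left hw t (h1 h)
    choose a ha using fun n => exists_tendsto_left (hwn n) t (h1 h)
    have e1 : olimL w I t = b := by rw [olimL, if_pos h]; exact hb.limUnder_eq
    have e2 : ∀ n, olimL (wn n) I t = a n := fun n => by
      rw [olimL, if_pos h]; exact (ha n).limUnder_eq
    rw [e1]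
    simp only [e2]
    exact interchange_limits
      (Filter.mem_of_superset self_mem_nhdsWithin fun x hx => hx.1) hunif ha hb
  · simp only [olimL, if_neg h]
    exact hunif.tendsto_at (h2 h)

lemma olimR_tendsto (hw : BoundedVariationOn w I) (hwn : ∀ n, BoundedVariationOn (wn n) I)
    (hunif : TendstoUniformlyOn wn w atTop I) (t : ℝ)
    (h1 : (I ∩ Set.Ioi t).Nonempty → (𝓝[I ∩ Set.Ioi t] t).NeBot)
    (h2 : ¬(I ∩ Set.Ioi t).Nonempty → t ∈ I) :
    Tendsto (fun n => olimR (wn n) I t) atTop (𝓝 (olimR w I t)) := by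
  by_cases h : (I ∩ Set.Ioi t).Nonempty
  · haveI := h1 h
    obtain ⟨b, hb⟩ := exists_tendsto_right hw t (h1 h)
    choose a ha using fun n => exists_tendsto_right (hwn n) t (h1 h)
    have e1 : olimR w I t = b := by rw [olimR, if_pos h]; exact hb.limUnder_eq
    have e2 : ∀ n, olimR (wn n) I t = a n := fun n => by
      rw [olimR, if_pos h]; exact (ha n).limUnder_eq
    rw [e1]
    simp only [e2]
    exact interchange_limits
      (Filter.mem_of_superset self_mem_nhdsWithin fun x hx => hx.1) hunif ha hb
  · simp only [olimR, if_neg h]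
    exact hunif.tendsto_at (h2 h)

end OlimConv

lemma nnnorm_apply_le_vmEVar {H : Type*} [NormedAddCommGroup H]
    (τ : MeasureTheory.VectorMeasure ℝ H) {B : Set ℝ} (hB : MeasurableSet B) :
    (‖τ B‖₊ : ℝ≥0∞) ≤ vmEVar τ := by
  have h : (‖τ B‖₊ : ℝ≥0∞) = ∑ i : Fin 1, (‖τ ((fun _ : Fin 1 => B) i)‖₊ : ℝ≥0∞) := by simp
  rw [h, vmEVar]
  exact le_iSup_of_le 1 (le_iSup_of_le (fun _ => B) (le_iSup_of_le (fun _ => hB)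
    (le_iSup_of_le (fun i j hij => absurd (Subsingleton.elim i j) hij) le_rfl)))

/-- If `w_n → w` uniformly on the interval `I`, all of bounded variation, and the
differential measures `Dw_n` converge weakly (tested against all bounded linear
functionals for the total variation norm) to a vector measure `μ` of bounded variation,
then `μ = Dw`. -/
theorem stmt_17 {H : Type*} [NormedAddCommGroup H] [InnerProductSpace ℝ H] [CompleteSpace H]
    (I : Set ℝ) (hI : I.OrdConnected) (hIne : I.Nonempty)
    (w : ℝ → H) (wn : ℕ → ℝ → H)
    (hw : BoundedVariationOn w I) (hwn : ∀ n, BoundedVariationOn (wn n) I)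
    (σ : ℕ → MeasureTheory.VectorMeasure ℝ H)
    (hσ : ∀ n, IsDiffMeasure I (wn n) (σ n))
    (hσbv : ∀ n, vmEVar (σ n) ≠ ⊤)
    (μ : MeasureTheory.VectorMeasure ℝ H)
    (hμbv : vmEVar μ ≠ ⊤)
    (hunif : TendstoUniformlyOn wn w atTop I)
    (hweak : ∀ Λ : MeasureTheory.VectorMeasure ℝ H →ₗ[ℝ] ℝ,
        (∃ C : ℝ≥0∞, ∀ τ : MeasureTheory.VectorMeasure ℝ H,
          (‖Λ τ‖₊ : ℝ≥0∞) ≤ C * vmEVar τ) →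
        Filter.Tendsto (fun n => Λ (σ n)) atTop (𝓝 (Λ μ))) :
    IsDiffMeasure I w μ := by
    -- weak identification of `μ B` from strong convergence of `σ n B`
  have key : ∀ (B : Set ℝ), MeasurableSet B → ∀ b : H,
      Tendsto (fun n => σ n B) atTop (𝓝 b) → μ B = b := by
    intro B hB b hconv
    refine ext_inner_left ℝ fun x => ?_
    let Λ : MeasureTheory.VectorMeasure ℝ H →ₗ[ℝ] ℝ :=
      { toFun := fun τ => (inner ℝ x (τ B) : ℝ)
        map_add' := fun τ₁ τ₂ => by
          simp [MeasureTheory.VectorMeasure.add_apply, inner_add_right]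
        map_smul' := fun c τ => by
          simp [MeasureTheory.VectorMeasure.smul_apply, real_inner_smul_right] }
    have hC : ∃ C : ℝ≥0∞, ∀ τ : MeasureTheory.VectorMeasure ℝ H,
        (‖Λ τ‖₊ : ℝ≥0∞) ≤ C * vmEVar τ := by
      refine ⟨(‖x‖₊ : ℝ≥0∞), fun τ => ?_⟩
      have h1 : ‖(inner ℝ x (τ B) : ℝ)‖₊ ≤ ‖x‖₊ * ‖τ B‖₊ := nnnorm_inner_le_nnnorm (𝕜 := ℝ) x (τ B)
      calc (‖Λ τ‖₊ : ℝ≥0∞) ≤ ((‖x‖₊ * ‖τ B‖₊ : ℝ≥0) : ℝ≥0∞) := by exact_mod_cast h1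
        _ = (‖x‖₊ : ℝ≥0∞) * (‖τ B‖₊ : ℝ≥0∞) := by rw [ENNReal.coe_mul]
        _ ≤ (‖x‖₊ : ℝ≥0∞) * vmEVar τ := mul_le_mul_right (nnnorm_apply_le_vmEVar τ hB) _
    have h1 : Tendsto (fun n => (inner ℝ x (σ n B) : ℝ)) atTop (𝓝 (inner ℝ x (μ B))) := hweak Λ hC
    have h2 : Tendsto (fun n => (inner ℝ x (σ n B) : ℝ)) atTop (𝓝 (inner ℝ x b)) :=
      tendsto_const_nhds.inner hconv
    exact tendsto_nhds_unique h1 h2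
  -- NeBot helpers
  have hLio : ∀ c d : ℝ, c < d → Set.Ioo c d ⊆ I → (𝓝[I ∩ Set.Iio d] d).NeBot := by
    intro c d hcd hsub
    exact (nhds_Ioo_right_neBot hcd).mono
      (nhdsWithin_mono d fun z hz => ⟨hsub hz, hz.2⟩)
  have hRio : ∀ c d : ℝ, c < d → Set.Ioo c d ⊆ I → (𝓝[I ∩ Set.Ioi c] c).NeBot := by
    intro c d hcd hsub
    exact (nhds_Ioo_left_neBot hcd).mono
      (nhdsWithin_mono c fun z hz => ⟨hsub hz, hz.1⟩)
  have hLmem : ∀ t ∈ I, (I ∩ Set.Iio t).Nonempty → (𝓝[I ∩ Set.Iio t] t).NeBot := by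
    rintro t ht ⟨s, hsI, hst⟩
    have hsub : Set.Ioo s t ⊆ I := fun z hz => hI.out hsI ht ⟨hz.1.le, hz.2.le⟩
    exact hLio s t hst hsub
  have hRmem : ∀ t ∈ I, (I ∩ Set.Ioi t).Nonempty → (𝓝[I ∩ Set.Ioi t] t).NeBot := by
    rintro t ht ⟨s, hsI, hst⟩
    have hsub : Set.Ioo t s ⊆ I := fun z hz => hI.out ht hsI ⟨hz.1.le, hz.2.le⟩
    exact hRio t s hst hsub
  refine ⟨?_, ?_, ?_, ?_, ?_⟩
  · -- concentrated on I
    intro B hB hBI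
    refine key B hB 0 ?_
    have : ∀ n, σ n B = 0 := fun n => (hσ n).1 B hB hBI
    simp only [this]
    exact tendsto_const_nhds
  · -- Ioo
    intro c d hcd hsub
    refine key _ measurableSet_Ioo _ ?_
    have e : ∀ n, σ n (Set.Ioo c d) = olimL (wn n) I d - olimR (wn n) I c :=
      fun n => (hσ n).2.1 c d hcd hsub
    simp only [e]
    have hne : (I ∩ Set.Iio d).Nonempty :=
      ((Set.nonempty_Ioo.2 hcd).mono fun z hz => (⟨hsub hz, hz.2⟩ : z ∈ I ∩ Set.Iio d))
    have hne' : (I ∩ Set.Ioi c).Nonempty :=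
      ((Set.nonempty_Ioo.2 hcd).mono fun z hz => (⟨hsub hz, hz.1⟩ : z ∈ I ∩ Set.Ioi c))
    exact (olimL_tendsto hw hwn hunif d (fun _ => hLio c d hcd hsub)
        (fun hc => absurd hne hc)).sub
      (olimR_tendsto hw hwn hunif c (fun _ => hRio c d hcd hsub)
        (fun hc => absurd hne' hc))
  · -- Icc
    intro c d hcd hsub
    refine key _ measurableSet_Icc _ ?_
    have e : ∀ n, σ n (Set.Icc c d) = olimR (wn n) I d - olimL (wn n) I c :=
      fun n => (hσ n).2.2.1 c d hcd hsub
    simp only [e]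
    have hcI : c ∈ I := hsub (Set.left_mem_Icc.2 hcd.le)
    have hdI : d ∈ I := hsub (Set.right_mem_Icc.2 hcd.le)
    exact (olimR_tendsto hw hwn hunif d (hRmem d hdI) (fun _ => hdI)).sub
      (olimL_tendsto hw hwn hunif c (hLmem c hcI) (fun _ => hcI))
  · -- Ico
    intro c d hcd hsub
    refine key _ measurableSet_Ico _ ?_
    have e : ∀ n, σ n (Set.Ico c d) = olimL (wn n) I d - olimL (wn n) I c :=
      fun n => (hσ n).2.2.2.1 c d hcd hsub
    simp only [e]
    have hcI : c ∈ I := hsub (Set.left_mem_Ico.2 hcd)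
    have hsub' : Set.Ioo c d ⊆ I := fun z hz => hsub ⟨hz.1.le, hz.2⟩
    have hne : (I ∩ Set.Iio d).Nonempty :=
      ((Set.nonempty_Ioo.2 hcd).mono fun z hz => (⟨hsub' hz, hz.2⟩ : z ∈ I ∩ Set.Iio d))
    exact (olimL_tendsto hw hwn hunif d (fun _ => hLio c d hcd hsub')
        (fun hc => absurd hne hc)).sub
      (olimL_tendsto hw hwn hunif c (hLmem c hcI) (fun _ => hcI))
  · -- Ioc
    intro c d hcd hsub
    refine key _ measurableSet_Ioc _ ?_
    have e : ∀ n, σ n (Set.Ioc c d) = olimR (wn n) I d - olimR (wn n) I c :=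
      fun n => (hσ n).2.2.2.2 c d hcd hsub
    simp only [e]
    have hdI : d ∈ I := hsub (Set.right_mem_Ioc.2 hcd)
    have hsub' : Set.Ioo c d ⊆ I := fun z hz => hsub ⟨hz.1, hz.2.le⟩
    have hne' : (I ∩ Set.Ioi c).Nonempty :=
      ((Set.nonempty_Ioo.2 hcd).mono fun z hz => (⟨hsub' hz, hz.1⟩ : z ∈ I ∩ Set.Ioi c))
    exact (olimR_tendsto hw hwn hunif d (hRmem d hdI) (fun _ => hdI)).sub
      (olimR_tendsto hw hwn hunif c (fun _ => hRio c d hcd hsub')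
        (fun hc => absurd hne' hc))
end

section
/- Let H be a real Hilbert space, T > 0, and u, u_n : [0,T] → H right-continuous of bounded variation for all n ∈ ℕ, with ‖u_n - u‖_∞ + V(u_n - u, [0,T]) → 0 as n → ∞. Define ℓ(t) := (T/V(u,[0,T]))·V(u,[0,t]) and ℓ_n(t) := (T/V(u_n,[0,T]))·V(u_n,[0,t]) (assuming V(u,[0,T]) > 0, and hence V(u_n,[0,T]) > 0 for n large). Then V(ℓ_n - ℓ, [0,T]) → 0 as n → ∞. -/
open Set Filter Topology MeasureTheory ENNReal

lemma evar_add_le {α E : Type*} [LinearOrder α] [SeminormedAddCommGroup E]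
    (f g : α → E) (s : Set α) :
    eVariationOn (fun x => f x + g x) s ≤ eVariationOn f s + eVariationOn g s := by
  apply iSup_le
  rintro ⟨n, ⟨p, hp, ps⟩⟩
  calc ∑ i ∈ Finset.range n, edist (f (p (i+1)) + g (p (i+1))) (f (p i) + g (p i))
      ≤ ∑ i ∈ Finset.range n,
          (edist (f (p (i+1))) (f (p i)) + edist (g (p (i+1))) (g (p i))) :=
        Finset.sum_le_sum fun i _ => edist_add_add_le _ _ _ _
    _ = (∑ i ∈ Finset.range n, edist (f (p (i+1))) (f (p i)))
        + ∑ i ∈ Finset.range n, edist (g (p (i+1))) (g (p i)) := Finset.sum_add_distrib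
    _ ≤ _ := add_le_add (eVariationOn.sum_le (f := f) (n := n) hp ps) (eVariationOn.sum_le (f := g) (n := n) hp ps)

lemma evar_neg {α E : Type*} [LinearOrder α] [SeminormedAddCommGroup E]
    (f : α → E) (s : Set α) :
    eVariationOn (fun x => -f x) s = eVariationOn f s := by
  unfold eVariationOn
  congr 1 with p
  congr 1 with i
  rw [edist_neg_neg]

lemma evar_const_mul {α : Type*} [LinearOrder α] (a : ℝ) (f : α → ℝ) (s : Set α) :
    eVariationOn (fun x => a * f x) s ≤ (‖a‖₊ : ℝ≥0∞) * eVariationOn f s := by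
  apply iSup_le
  rintro ⟨n, ⟨p, hp, ps⟩⟩
  calc ∑ i ∈ Finset.range n, edist (a * f (p (i+1))) (a * f (p i))
      = ∑ i ∈ Finset.range n, (‖a‖₊ : ℝ≥0∞) * edist (f (p (i+1))) (f (p i)) := by
        refine Finset.sum_congr rfl fun i _ => ?_
        rw [edist_eq_enorm_sub, edist_eq_enorm_sub, ← mul_sub, enorm_mul]
        rfl
    _ = (‖a‖₊ : ℝ≥0∞) * ∑ i ∈ Finset.range n, edist (f (p (i+1))) (f (p i)) := by
        rw [Finset.mul_sum]
    _ ≤ _ := mul_le_mul_right (eVariationOn.sum_le (f := f) (n := n) hp ps) _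

lemma abs_toReal_sub_le {X Y Z : ℝ≥0∞} (hX : X ≠ ∞) (hY : Y ≠ ∞) (hZ : Z ≠ ∞)
    (h1 : X ≤ Y + Z) (h2 : Y ≤ X + Z) : |X.toReal - Y.toReal| ≤ Z.toReal := by
  rw [abs_sub_le_iff]
  constructor
  · have := ENNReal.toReal_mono (ENNReal.add_ne_top.2 ⟨hY, hZ⟩) h1
    rw [ENNReal.toReal_add hY hZ] at this; linarith
  · have := ENNReal.toReal_mono (ENNReal.add_ne_top.2 ⟨hX, hZ⟩) h2
    rw [ENNReal.toReal_add hX hZ] at this; linarith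

lemma chain_sum_le {E : Type*} [PseudoEMetricSpace E] (g : ℝ → E) (T : ℝ)
    {p : ℕ → ℝ} (hp : Monotone p) (ps : ∀ i, p i ∈ Icc (0:ℝ) T) (N : ℕ) :
    ∑ i ∈ Finset.range N, eVariationOn g (Icc (p i) (p (i+1)))
      ≤ eVariationOn g (Icc 0 T) := by
  have key : ∀ n, ∑ i ∈ Finset.range n, eVariationOn g (Icc 0 T ∩ Icc (p i) (p (i+1)))
      = eVariationOn g (Icc 0 T ∩ Icc (p 0) (p n)) := by
    intro n
    induction n with
    | zero =>
      rw [Finset.range_zero, Finset.sum_empty]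
      refine (eVariationOn.subsingleton g ?_).symm
      rw [Icc_self]
      exact subsingleton_singleton.anti inter_subset_right
    | succ n ih =>
      rw [Finset.sum_range_succ, ih,
        eVariationOn.Icc_add_Icc g (hp (Nat.zero_le n)) (hp (Nat.le_succ n)) (ps n)]
  calc ∑ i ∈ Finset.range N, eVariationOn g (Icc (p i) (p (i+1)))
      = ∑ i ∈ Finset.range N, eVariationOn g (Icc 0 T ∩ Icc (p i) (p (i+1))) := by
        refine Finset.sum_congr rfl fun i _ => ?_
        rw [Icc_inter_Icc, max_eq_right (ps i).1, min_eq_right (ps (i+1)).2]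
    _ = eVariationOn g (Icc 0 T ∩ Icc (p 0) (p N)) := key N
    _ ≤ _ := eVariationOn.mono g inter_subset_left

lemma toReal_split {H : Type*} [SeminormedAddCommGroup H] {T : ℝ} (f : ℝ → H)
    (hf : eVariationOn f (Icc 0 T) ≠ ∞) {a b : ℝ} (ha : a ∈ Icc (0:ℝ) T)
    (hb : b ∈ Icc (0:ℝ) T) (hab : a ≤ b) :
    (eVariationOn f (Icc 0 b)).toReal
      = (eVariationOn f (Icc 0 a)).toReal + (eVariationOn f (Icc a b)).toReal := by
  have h := eVariationOn.Icc_add_Icc f (s := Icc 0 T) ha.1 hab ha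
  rw [Icc_inter_Icc, Icc_inter_Icc, Icc_inter_Icc, max_self, max_eq_right ha.1,
    min_eq_right ha.2, min_eq_right hb.2] at h
  rw [← h, ENNReal.toReal_add]
  · exact ne_top_of_le_ne_top hf (eVariationOn.mono f (Icc_subset_Icc le_rfl ha.2))
  · exact ne_top_of_le_ne_top hf (eVariationOn.mono f (Icc_subset_Icc ha.1 hb.2))

lemma evar_sub_le_aux {H : Type*} [SeminormedAddCommGroup H] (f g : ℝ → H) (s : Set ℝ) :
    eVariationOn f s ≤ eVariationOn g s + eVariationOn (fun t => f t - g t) s := by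
  have hf : f = fun t => g t + (f t - g t) := by funext t; abel
  calc eVariationOn f s = eVariationOn (fun t => g t + (f t - g t)) s := by rw [← hf]
    _ ≤ _ := evar_add_le _ _ _

lemma varDiff_le {H : Type*} [SeminormedAddCommGroup H] (T : ℝ) (f g : ℝ → H)
    (hf : eVariationOn f (Icc 0 T) ≠ ∞) (hg : eVariationOn g (Icc 0 T) ≠ ∞)
    (hfg : eVariationOn (fun t => f t - g t) (Icc 0 T) ≠ ∞) :
    eVariationOn (fun t => (eVariationOn f (Icc 0 t)).toReal
        - (eVariationOn g (Icc 0 t)).toReal) (Icc 0 T)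
      ≤ eVariationOn (fun t => f t - g t) (Icc 0 T) := by
  have hgf : eVariationOn (fun t => g t - f t) (Icc 0 T)
      = eVariationOn (fun t => f t - g t) (Icc 0 T) := by
    have : (fun t => g t - f t) = fun t => -(f t - g t) := by funext t; abel
    rw [this, evar_neg]
  apply iSup_le
  rintro ⟨N, ⟨p, hp, ps⟩⟩
  have step : ∀ i, edist ((eVariationOn f (Icc 0 (p (i+1)))).toReal
        - (eVariationOn g (Icc 0 (p (i+1)))).toReal)
      ((eVariationOn f (Icc 0 (p i))).toReal - (eVariationOn g (Icc 0 (p i))).toReal)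
      ≤ eVariationOn (fun t => f t - g t) (Icc (p i) (p (i+1))) := by
    intro i
    set a := p i
    set b := p (i+1)
    have hab : a ≤ b := hp (Nat.le_succ i)
    have hsub : Icc a b ⊆ Icc (0:ℝ) T := Icc_subset_Icc (ps i).1 (ps (i+1)).2
    have hXne : eVariationOn f (Icc a b) ≠ ∞ :=
      ne_top_of_le_ne_top hf (eVariationOn.mono f hsub)
    have hYne : eVariationOn g (Icc a b) ≠ ∞ :=
      ne_top_of_le_ne_top hg (eVariationOn.mono g hsub)
    have hZne : eVariationOn (fun t => f t - g t) (Icc a b) ≠ ∞ :=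
      ne_top_of_le_ne_top hfg (eVariationOn.mono _ hsub)
    have h1 : eVariationOn f (Icc a b)
        ≤ eVariationOn g (Icc a b) + eVariationOn (fun t => f t - g t) (Icc a b) :=
      evar_sub_le_aux f g _
    have h2 : eVariationOn g (Icc a b)
        ≤ eVariationOn f (Icc a b) + eVariationOn (fun t => f t - g t) (Icc a b) := by
      have := evar_sub_le_aux g f (Icc a b)
      rwa [show eVariationOn (fun t => g t - f t) (Icc a b)
          = eVariationOn (fun t => f t - g t) (Icc a b) by
        have : (fun t => g t - f t) = fun t => -(f t - g t) := by funext t; abel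
        rw [this, evar_neg]] at this
    have habs := abs_toReal_sub_le hXne hYne hZne h1 h2
    rw [edist_dist, Real.dist_eq]
    have heq : ((eVariationOn f (Icc 0 b)).toReal - (eVariationOn g (Icc 0 b)).toReal)
        - ((eVariationOn f (Icc 0 a)).toReal - (eVariationOn g (Icc 0 a)).toReal)
        = (eVariationOn f (Icc a b)).toReal - (eVariationOn g (Icc a b)).toReal := by
      rw [toReal_split f hf (ps i) (ps (i+1)) hab, toReal_split g hg (ps i) (ps (i+1)) hab]
      ring
    rw [heq]
    calc ENNReal.ofReal |(eVariationOn f (Icc a b)).toReal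
          - (eVariationOn g (Icc a b)).toReal|
        ≤ ENNReal.ofReal (eVariationOn (fun t => f t - g t) (Icc a b)).toReal :=
          ENNReal.ofReal_le_ofReal habs
      _ = eVariationOn (fun t => f t - g t) (Icc a b) := ENNReal.ofReal_toReal hZne
  calc ∑ i ∈ Finset.range N, edist _ _
      ≤ ∑ i ∈ Finset.range N, eVariationOn (fun t => f t - g t) (Icc (p i) (p (i+1))) :=
        Finset.sum_le_sum fun i _ => step i
    _ ≤ _ := chain_sum_le _ T hp ps N

/-- If `u_n → u` in `BV` norm (uniformly and in variation), with `u, u_n` right continuous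
of bounded variation on `[0,T]` and `V(u,[0,T]) > 0`, then the normalized arc length
functions satisfy `V(ℓ_n - ℓ, [0,T]) → 0`. -/
theorem stmt_19 {H : Type*} [NormedAddCommGroup H] [InnerProductSpace ℝ H] [CompleteSpace H]
    (T : ℝ) (hT : 0 < T)
    (u : ℝ → H) (un : ℕ → ℝ → H)
    (hrc : ∀ t ∈ Set.Ico 0 T, Filter.Tendsto u (𝓝[Set.Icc 0 T ∩ Set.Ioi t] t) (𝓝 (u t)))
    (hrcn : ∀ n, ∀ t ∈ Set.Ico 0 T,
        Filter.Tendsto (un n) (𝓝[Set.Icc 0 T ∩ Set.Ioi t] t) (𝓝 (un n t)))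
    (hbv : BoundedVariationOn u (Set.Icc 0 T))
    (hbvn : ∀ n, BoundedVariationOn (un n) (Set.Icc 0 T))
    (hunif : TendstoUniformlyOn un u atTop (Set.Icc 0 T))
    (hvar : Filter.Tendsto (fun n => eVariationOn (fun t => un n t - u t) (Set.Icc 0 T))
        atTop (𝓝 0))
    (hVpos : 0 < (eVariationOn u (Set.Icc 0 T)).toReal)
    (ℓ : ℝ → ℝ)
    (hℓ : ∀ t, ℓ t = (T / (eVariationOn u (Set.Icc 0 T)).toReal)
        * (eVariationOn u (Set.Icc 0 t)).toReal)
    (ℓn : ℕ → ℝ → ℝ)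
    (hℓn : ∀ n t, ℓn n t = (T / (eVariationOn (un n) (Set.Icc 0 T)).toReal)
        * (eVariationOn (un n) (Set.Icc 0 t)).toReal) :
    Filter.Tendsto (fun n => eVariationOn (fun t => ℓn n t - ℓ t) (Set.Icc 0 T))
      atTop (𝓝 0) := by
  set V : ℝ≥0∞ := eVariationOn u (Set.Icc 0 T) with hV
  set Vn : ℕ → ℝ≥0∞ := fun n => eVariationOn (un n) (Set.Icc 0 T) with hVn
  set W : ℕ → ℝ≥0∞ := fun n => eVariationOn (fun t => un n t - u t) (Set.Icc 0 T) with hW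
  set c : ℝ := T / V.toReal with hc
  set cn : ℕ → ℝ := fun n => T / (Vn n).toReal with hcn
  set G : ℝ → ℝ := fun t => (eVariationOn u (Set.Icc 0 t)).toReal with hG
  -- W n eventually finite
  have h1 : ∀ᶠ n in atTop, W n < 1 := hvar.eventually_lt_const (by norm_num)
  have h1' : ∀ᶠ n in atTop, W n ≠ ∞ := h1.mono fun n hn => hn.trans_le le_top |>.ne
  -- toReal of W tends to 0
  have hWr : Tendsto (fun n => (W n).toReal) atTop (𝓝 0) := by
    have := (ENNReal.tendsto_toReal (a := 0) (by simp)).comp hvar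
    simpa [Function.comp_def] using this
  -- Vn.toReal → V.toReal
  have habs : ∀ᶠ n in atTop, |(Vn n).toReal - V.toReal| ≤ (W n).toReal := by
    refine h1'.mono fun n hn => ?_
    refine abs_toReal_sub_le (hbvn n) hbv hn ?_ ?_
    · exact evar_sub_le_aux (un n) u _
    · have := evar_sub_le_aux u (un n) (Set.Icc 0 T)
      rwa [show eVariationOn (fun t => u t - un n t) (Set.Icc 0 T) = W n by
        rw [show (fun t => u t - un n t) = fun t => -(un n t - u t) by funext t; abel,
          evar_neg]] at this
  have hVnt : Tendsto (fun n => (Vn n).toReal) atTop (𝓝 V.toReal) := by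
    have hd : Tendsto (fun n => (Vn n).toReal - V.toReal) atTop (𝓝 0) :=
      squeeze_zero_norm' (habs.mono fun n h => by simpa [Real.norm_eq_abs] using h) hWr
    have := hd.add (tendsto_const_nhds (x := V.toReal))
    simpa using this
  have hcnt : Tendsto cn atTop (𝓝 c) :=
    tendsto_const_nhds.div hVnt (ne_of_gt hVpos)
  -- G is monotone on [0,T], so its variation is finite
  have hGmono : MonotoneOn G (Set.Icc 0 T) := by
    intro a ha b hb hab
    exact ENNReal.toReal_mono
      (ne_top_of_le_ne_top hbv (eVariationOn.mono u (Icc_subset_Icc le_rfl hb.2)))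
      (eVariationOn.mono u (Icc_subset_Icc le_rfl hab))
  have hVg : eVariationOn G (Set.Icc 0 T) ≠ ∞ := by
    have := hGmono.eVariationOn_le (left_mem_Icc.2 hT.le) (right_mem_Icc.2 hT.le)
    rw [inter_self] at this
    exact ne_top_of_le_ne_top ENNReal.ofReal_ne_top this
  -- the main eventual bound
  have hbound : ∀ᶠ n in atTop,
      eVariationOn (fun t => ℓn n t - ℓ t) (Set.Icc 0 T)
        ≤ (‖cn n‖₊ : ℝ≥0∞) * W n + (‖cn n - c‖₊ : ℝ≥0∞) * eVariationOn G (Set.Icc 0 T) := by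
    refine h1'.mono fun n hWne => ?_
    have hfun : (fun t => ℓn n t - ℓ t)
        = fun t => cn n * ((eVariationOn (un n) (Set.Icc 0 t)).toReal - G t)
            + (cn n - c) * G t := by
      funext t; rw [hℓn, hℓ]; simp only [hG]; ring
    rw [hfun]
    refine le_trans (evar_add_le _ _ _) (add_le_add ?_ ?_)
    · refine le_trans (evar_const_mul _ _ _) (mul_le_mul_right ?_ _)
      exact varDiff_le T (un n) u (hbvn n) hbv hWne
    · exact evar_const_mul _ _ _
  -- the bound tends to 0
  have hrhs : Tendsto (fun n => (‖cn n‖₊ : ℝ≥0∞) * W n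
      + (‖cn n - c‖₊ : ℝ≥0∞) * eVariationOn G (Set.Icc 0 T)) atTop (𝓝 0) := by
    have hA : Tendsto (fun n => (‖cn n‖₊ : ℝ≥0∞) * W n) atTop (𝓝 0) := by
      have h1 : Tendsto (fun n => (‖cn n‖₊ : ℝ≥0∞)) atTop (𝓝 (‖c‖₊ : ℝ≥0∞)) :=
        ENNReal.tendsto_coe.2 hcnt.nnnorm
      have := ENNReal.Tendsto.mul h1 (Or.inr (by simp)) hvar (Or.inr ENNReal.coe_ne_top)
      simpa using this
    have hB : Tendsto (fun n => (‖cn n - c‖₊ : ℝ≥0∞) * eVariationOn G (Set.Icc 0 T))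
        atTop (𝓝 0) := by
      have h2 : Tendsto (fun n => (‖cn n - c‖₊ : ℝ≥0∞)) atTop (𝓝 0) := by
        have := (hcnt.sub (tendsto_const_nhds (x := c))).nnnorm
        rw [sub_self, nnnorm_zero] at this
        simpa using ENNReal.tendsto_coe.2 this
      have := ENNReal.Tendsto.mul_const h2 (Or.inr hVg)
      simpa using this
    have := hA.add hB
    simpa using this
  exact tendsto_of_tendsto_of_tendsto_of_le_of_le' tendsto_const_nhds hrhs
    (Eventually.of_forall fun n => zero_le) hbound
end
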